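/- arXiv:2005.03146 — 3 statements merged into one kernel-verified Lean document; each statement's English description precedes it below -/
import Mathlib

section
/- Let n ≥ 2 be an integer and let p > 1 be a real number. For every function f : V(K_n) → ℝ one has Var_p(M_{K_n} f) ≤ (1 − 1/n) · Var_p f. Moreover, equality holds for the delta function f = δ_{a_2} (which satisfies Var_p δ_{a_2} > 0), so the best constant C_{K_n,p} := sup{ Var_p(M_{K_n} f)/Var_p f : f : V → ℝ, Var_p f > 0 } equals 1 − 1/n. -/
open scoped Classical

/-- The ball of radius `r` around `e` in the graph metric of `G`
(only vertices reachable from `e` are at finite distance). -/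
noncomputable def gball {V : Type*} [Fintype V] (G : SimpleGraph V) (e : V) (r : ℕ) :
    Finset V :=
  Finset.univ.filter fun m => G.Reachable e m ∧ G.dist e m ≤ r

/-- The centered Hardy–Littlewood maximal function on a finite graph. -/
noncomputable def mxHL {V : Type*} [Fintype V] (G : SimpleGraph V) (f : V → ℝ) (e : V) : ℝ :=
  ⨆ r : ℕ, (1 / ((gball G e r).card : ℝ)) * ∑ m ∈ gball G e r, |f m|

/-- The fractional centered Hardy–Littlewood maximal function on a finite graph. -/
noncomputable def mxFr {V : Type*} [Fintype V] (G : SimpleGraph V) (α : ℝ) (f : V → ℝ)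
    (e : V) : ℝ :=
  ⨆ r : ℕ, ((gball G e r).card : ℝ) ^ (α - 1) * ∑ m ∈ gball G e r, |f m|

/-- The `p`-variation of `f : V → ℝ` with respect to the graph `G`
(vertices at distance `1` are exactly the adjacent ones). -/
noncomputable def vp {V : Type*} [Fintype V] (G : SimpleGraph V) (p : ℝ) (f : V → ℝ) : ℝ :=
  ((1 / 2) * ∑ v : V, ∑ w : V, if G.Adj v w then |f v - f w| ^ p else 0) ^ (1 / p)

/-- The star graph on `Fin n`, with center the vertex with value `0`. -/
def starG (n : ℕ) : SimpleGraph (Fin n) where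
  Adj v w := v ≠ w ∧ (v.val = 0 ∨ w.val = 0)
  symm := ⟨fun _ _ h => ⟨h.1.symm, h.2.symm⟩⟩
  loopless := ⟨fun _ h => h.1 rfl⟩

/-- The `ℓ²` norm of a function on a finite vertex set. -/
noncomputable def nrm2 {V : Type*} [Fintype V] (g : V → ℝ) : ℝ :=
  Real.sqrt (∑ v : V, g v ^ 2)

/-! ### Auxiliary lemmas -/

section Aux

lemma gball_top_zero {n : ℕ} (e : Fin n) : gball (⊤ : SimpleGraph (Fin n)) e 0 = {e} := by
  ext m
  simp only [gball, Finset.mem_filter, Finset.mem_univ, true_and, Finset.mem_singleton,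
    Nat.le_zero]
  constructor
  · rintro ⟨hr, hd⟩
    exact ((hr.dist_eq_zero_iff).mp hd).symm
  · rintro rfl
    exact ⟨SimpleGraph.Reachable.refl _, SimpleGraph.dist_self⟩

lemma gball_top_pos {n : ℕ} (e : Fin n) (r : ℕ) (hr : 1 ≤ r) :
    gball (⊤ : SimpleGraph (Fin n)) e r = Finset.univ := by
  ext m
  simp only [gball, Finset.mem_filter, Finset.mem_univ, true_and, iff_true]
  by_cases h : e = m
  · subst h; exact ⟨SimpleGraph.Reachable.refl _, by simp [SimpleGraph.dist_self]⟩
  · refine ⟨((SimpleGraph.top_adj e m).mpr h).reachable, ?_⟩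
    rw [SimpleGraph.dist_top_of_ne h]; exact hr

lemma mxHL_top {n : ℕ} (f : Fin n → ℝ) (e : Fin n) :
    mxHL (⊤ : SimpleGraph (Fin n)) f e = max |f e| ((1 / (n : ℝ)) * ∑ v, |f v|) := by
  set A := (1 / (n : ℝ)) * ∑ v, |f v| with hA
  have hcard : ((Finset.univ : Finset (Fin n)).card : ℝ) = n := by simp
  have hval : ∀ r : ℕ,
      (1 / ((gball (⊤ : SimpleGraph (Fin n)) e r).card : ℝ)) *
        ∑ m ∈ gball (⊤ : SimpleGraph (Fin n)) e r, |f m|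
      = if r = 0 then |f e| else A := by
    intro r
    rcases Nat.eq_zero_or_pos r with rfl | hr
    · simp [gball_top_zero]
    · rw [if_neg (Nat.pos_iff_ne_zero.mp hr), gball_top_pos e r hr, hA, hcard]
  have hub : ∀ r : ℕ, (1 / ((gball (⊤ : SimpleGraph (Fin n)) e r).card : ℝ)) *
      ∑ m ∈ gball (⊤ : SimpleGraph (Fin n)) e r, |f m| ≤ max |f e| A := by
    intro r; rw [hval r]
    split
    · exact le_max_left _ _
    · exact le_max_right _ _
  have hbdd : BddAbove (Set.range fun r : ℕ =>
      (1 / ((gball (⊤ : SimpleGraph (Fin n)) e r).card : ℝ)) *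
        ∑ m ∈ gball (⊤ : SimpleGraph (Fin n)) e r, |f m|) :=
    ⟨max |f e| A, by rintro x ⟨r, rfl⟩; exact hub r⟩
  apply le_antisymm
  · exact ciSup_le hub
  · apply max_le
    · have := le_ciSup hbdd 0
      rwa [hval 0, if_pos rfl] at this
    · have := le_ciSup hbdd 1
      rwa [hval 1, if_neg one_ne_zero] at this

/-- strict total order refining the decreasing order of `g` -/
def llt {n : ℕ} (g : Fin n → ℝ) (v w : Fin n) : Prop :=
  g w < g v ∨ (g v = g w ∧ v < w)

lemma llt_irrefl {n : ℕ} (g : Fin n → ℝ) (v : Fin n) : ¬ llt g v v := by simp [llt]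

lemma llt_total {n : ℕ} (g : Fin n → ℝ) {v w : Fin n} (h : v ≠ w) :
    llt g v w ∨ llt g w v := by
  rcases lt_trichotomy (g v) (g w) with h1 | h1 | h1
  · exact Or.inr (Or.inl h1)
  · rcases lt_or_gt_of_ne h with h2 | h2
    · exact Or.inl (Or.inr ⟨h1, h2⟩)
    · exact Or.inr (Or.inr ⟨h1.symm, h2⟩)
  · exact Or.inl (Or.inl h1)

lemma llt_asymm {n : ℕ} (g : Fin n → ℝ) {v w : Fin n} (h : llt g v w) : ¬ llt g w v := by
  rcases h with h | ⟨h1, h2⟩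
  · rintro (h' | ⟨h1', h2'⟩)
    · exact absurd (h.trans h') (lt_irrefl _)
    · exact absurd h (h1' ▸ lt_irrefl _)
  · rintro (h' | ⟨h1', h2'⟩)
    · exact absurd h' (h1 ▸ lt_irrefl _)
    · exact absurd (h2.trans h2') (lt_irrefl _)

lemma llt_le {n : ℕ} {g : Fin n → ℝ} {v w : Fin n} (h : llt g v w) : g w ≤ g v := by
  rcases h with h | ⟨h1, _⟩
  · exact h.le
  · exact h1.ge

lemma llt_ne {n : ℕ} {g : Fin n → ℝ} {v w : Fin n} (h : llt g v w) : w ≠ v := by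
  rintro rfl; exact llt_irrefl g _ h

/-- split a symmetric sum over distinct pairs using the total order -/
lemma sum_pairs {n : ℕ} (g : Fin n → ℝ) (F : Fin n → Fin n → ℝ)
    (hF : ∀ v w, F v w = F w v) :
    ∑ v : Fin n, ∑ w : Fin n, (if v ≠ w then F v w else 0)
      = 2 * ∑ v : Fin n, ∑ w : Fin n, (if llt g v w then F v w else 0) := by
  have key : ∀ v w : Fin n, (if v ≠ w then F v w else 0)
      = (if llt g v w then F v w else 0) + (if llt g w v then F v w else 0) := by
    intro v w
    by_cases h : v = w
    · subst h
      simp [llt_irrefl]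
    · rcases llt_total g h with h1 | h1
      · rw [if_pos h, if_pos h1, if_neg (llt_asymm g h1), add_zero]
      · rw [if_pos h, if_neg (llt_asymm g h1), if_pos h1, zero_add]
  simp_rw [key, Finset.sum_add_distrib]
  rw [two_mul]
  congr 1
  rw [Finset.sum_comm]
  exact Finset.sum_congr rfl fun a _ => Finset.sum_congr rfl fun b _ => by rw [hF b a]

lemma key_ineq {n : ℕ} (hn : 2 ≤ n) {p : ℝ} (hp : 1 < p) (g : Fin n → ℝ)
    (v : Fin n) :
    ∑ w ∈ Finset.univ.filter (fun w => llt g v w),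
        |max (g v) ((1/(n:ℝ)) * ∑ u, g u) - max (g w) ((1/(n:ℝ)) * ∑ u, g u)| ^ p
      ≤ (((n:ℝ)-1)/n) ^ p *
        ∑ w ∈ Finset.univ.filter (fun w => llt g v w), (g v - g w) ^ p := by
  have hn0 : (0:ℝ) < n := by positivity
  have hp0 : (0:ℝ) ≤ p := by linarith
  have hpne : p ≠ 0 := by linarith
  set A : ℝ := (1/(n:ℝ)) * ∑ u, g u with hA
  set s : Finset (Fin n) := Finset.univ.filter (fun w => llt g v w) with hs
  have hzed : ∀ w ∈ s, (0:ℝ) ≤ g v - g w := by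
    intro w hw
    have := llt_le (Finset.mem_filter.mp hw).2
    linarith
  have hsum0 : (0:ℝ) ≤ ∑ w ∈ s, (g v - g w) ^ p :=
    Finset.sum_nonneg fun w hw => Real.rpow_nonneg (hzed w hw) p
  have hn1 : (1:ℝ) ≤ (n:ℝ) := by exact_mod_cast Nat.one_le_of_lt hn
  have hcnn : (0:ℝ) ≤ (((n:ℝ)-1)/n) ^ p :=
    Real.rpow_nonneg (div_nonneg (by linarith) hn0.le) p
  rcases le_or_gt (g v) A with hvA | hvA
  · -- g v ≤ A : all LHS terms vanish
    have : ∑ w ∈ s, |max (g v) A - max (g w) A| ^ p = 0 := by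
      apply Finset.sum_eq_zero
      intro w hw
      have h1 : max (g v) A = A := max_eq_right hvA
      have h2 : max (g w) A = A := max_eq_right ((llt_le (Finset.mem_filter.mp hw).2).trans hvA)
      rw [h1, h2, sub_self, abs_zero, Real.zero_rpow hpne]
    rw [this]
    exact mul_nonneg hcnn hsum0
  · -- main case : A < g v
    have hterm : ∀ w ∈ s, |max (g v) A - max (g w) A| ^ p ≤ (g v - A) ^ p := by
      intro w hw
      have h1 : max (g v) A = g v := max_eq_left hvA.le
      have h2 : A ≤ max (g w) A := le_max_right _ _
      have h3 : max (g w) A ≤ g v :=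
        max_le ((llt_le (Finset.mem_filter.mp hw).2).trans le_rfl) hvA.le
      rw [h1, abs_of_nonneg (by linarith)]
      exact Real.rpow_le_rpow (by linarith) (by linarith) hp0
    have hLHS : ∑ w ∈ s, |max (g v) A - max (g w) A| ^ p ≤ (s.card : ℝ) * (g v - A) ^ p := by
      have := Finset.sum_le_card_nsmul s _ ((g v - A) ^ p) hterm
      rwa [nsmul_eq_mul] at this
    -- s is nonempty
    obtain ⟨w₀, -, hw₀⟩ := Finset.exists_min_image Finset.univ g ⟨v, Finset.mem_univ v⟩
    have hw₀A : g w₀ ≤ A := by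
      have h1 : (n:ℝ) * g w₀ ≤ ∑ u, g u := by
        calc (n:ℝ) * g w₀ = ∑ _u : Fin n, g w₀ := by
              rw [Finset.sum_const, Finset.card_univ, Fintype.card_fin, nsmul_eq_mul]
          _ ≤ ∑ u, g u := Finset.sum_le_sum fun u _ => hw₀ u (Finset.mem_univ u)
      have h2 : (1/(n:ℝ)) * ((n:ℝ) * g w₀) ≤ (1/(n:ℝ)) * ∑ u, g u :=
        mul_le_mul_of_nonneg_left h1 (by positivity)
      have h3 : (1/(n:ℝ)) * ((n:ℝ) * g w₀) = g w₀ := by field_simp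
      rw [hA]; linarith
    have hw₀s : w₀ ∈ s := by
      rw [hs, Finset.mem_filter]
      exact ⟨Finset.mem_univ _, Or.inl (lt_of_le_of_lt hw₀A hvA)⟩
    have hm1 : 1 ≤ s.card := Finset.card_pos.mpr ⟨w₀, hw₀s⟩
    have hm0 : (0:ℝ) < (s.card : ℝ) := by exact_mod_cast hm1
    have hmne : ((s.card : ℝ)) ≠ 0 := ne_of_gt hm0
    -- s.card ≤ n - 1
    have hmn : (s.card : ℝ) ≤ (n:ℝ) - 1 := by
      have hsub : s ⊆ Finset.univ.erase v := by
        intro w hw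
        exact Finset.mem_erase.mpr ⟨llt_ne (Finset.mem_filter.mp hw).2, Finset.mem_univ w⟩
      have := Finset.card_le_card hsub
      rw [Finset.card_erase_of_mem (Finset.mem_univ v), Finset.card_univ, Fintype.card_fin]
        at this
      have h2 : (s.card : ℝ) ≤ ((n - 1 : ℕ) : ℝ) := by exact_mod_cast this
      rwa [Nat.cast_sub (by omega), Nat.cast_one] at h2
    -- mean bound : n * (g v - A) ≤ ∑_{w ∈ s} (g v - g w)
    set X : ℝ := ∑ w ∈ s, (g v - g w) with hX
    have hXnn : 0 ≤ X := Finset.sum_nonneg hzed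
    have hmean : (n:ℝ) * (g v - A) ≤ X := by
      have e1 : ∑ w : Fin n, (g v - g w) = (n:ℝ) * g v - ∑ u, g u := by
        rw [Finset.sum_sub_distrib, Finset.sum_const, Finset.card_univ, Fintype.card_fin,
          nsmul_eq_mul]
      have e2 : (n:ℝ) * (g v - A) = (n:ℝ) * g v - ∑ u, g u := by
        rw [hA]; field_simp
      have e3 : ∑ w : Fin n, (g v - g w)
          = X + ∑ w ∈ Finset.univ.filter (fun w => ¬ llt g v w), (g v - g w) := by
        rw [hX, hs]
        exact (Finset.sum_filter_add_sum_filter_not _ _ _).symm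
      have e4 : ∑ w ∈ Finset.univ.filter (fun w => ¬ llt g v w), (g v - g w) ≤ 0 := by
        apply Finset.sum_nonpos
        intro w hw
        have hnw := (Finset.mem_filter.mp hw).2
        by_cases hwv : w = v
        · subst hwv; simp
        · rcases llt_total g (Ne.symm hwv) with h | h
          · exact absurd h hnw
          · have := llt_le h; linarith
      rw [e2, ← e1, e3]; linarith
    have hdiv : g v - A ≤ X / (n:ℝ) := by
      rw [le_div_iff₀ hn0]; linarith
    -- Jensen
    have hjen : (X / (s.card : ℝ)) ^ p ≤ (1/(s.card : ℝ)) * ∑ w ∈ s, (g v - g w) ^ p := by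
      have := Real.rpow_arith_mean_le_arith_mean_rpow s (fun _ => 1/(s.card : ℝ))
        (fun w => g v - g w) (fun i _ => by positivity)
        (by rw [Finset.sum_const, nsmul_eq_mul]; field_simp) hzed hp.le
      rw [← Finset.mul_sum, ← Finset.mul_sum] at this
      rwa [div_eq_mul_inv, mul_comm X, ← one_div]
    have hfrac : ((s.card : ℝ)/(n:ℝ)) ^ p ≤ (((n:ℝ)-1)/n) ^ p := by
      apply Real.rpow_le_rpow (by positivity) (by gcongr) hp0
    have hsplit : (X / (n:ℝ)) ^ p = ((s.card : ℝ)/(n:ℝ)) ^ p * (X / (s.card : ℝ)) ^ p := by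
      rw [← Real.mul_rpow (by positivity) (by positivity)]
      congr 1
      field_simp
    have hstep : (g v - A) ^ p ≤ (X / (n:ℝ)) ^ p :=
      Real.rpow_le_rpow (by linarith) hdiv hp0
    calc ∑ w ∈ s, |max (g v) A - max (g w) A| ^ p
        ≤ (s.card : ℝ) * (g v - A) ^ p := hLHS
      _ ≤ (s.card : ℝ) * ((X / (n:ℝ)) ^ p) := mul_le_mul_of_nonneg_left hstep hm0.le
      _ = (s.card : ℝ) * (((s.card : ℝ)/(n:ℝ)) ^ p * (X / (s.card : ℝ)) ^ p) := by rw [hsplit]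
      _ ≤ (s.card : ℝ) *
            (((s.card : ℝ)/(n:ℝ)) ^ p * ((1/(s.card : ℝ)) * ∑ w ∈ s, (g v - g w) ^ p)) := by
          apply mul_le_mul_of_nonneg_left _ hm0.le
          exact mul_le_mul_of_nonneg_left hjen (by positivity)
      _ = ((s.card : ℝ)/(n:ℝ)) ^ p * ∑ w ∈ s, (g v - g w) ^ p := by
          rw [mul_left_comm]; congr 1; field_simp
      _ ≤ (((n:ℝ)-1)/n) ^ p * ∑ w ∈ s, (g v - g w) ^ p :=
          mul_le_mul_of_nonneg_right hfrac hsum0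

lemma main_sum {n : ℕ} (hn : 2 ≤ n) {p : ℝ} (hp : 1 < p) (g : Fin n → ℝ) :
    ∑ v : Fin n, ∑ w : Fin n,
        (if v ≠ w then
          |max (g v) ((1/(n:ℝ)) * ∑ u, g u) - max (g w) ((1/(n:ℝ)) * ∑ u, g u)| ^ p else 0)
      ≤ (((n:ℝ)-1)/n) ^ p *
        ∑ v : Fin n, ∑ w : Fin n, (if v ≠ w then |g v - g w| ^ p else 0) := by
  set A : ℝ := (1/(n:ℝ)) * ∑ u, g u with hA
  rw [sum_pairs g (fun v w => |max (g v) A - max (g w) A| ^ p)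
    (fun v w => by rw [abs_sub_comm]),
    sum_pairs g (fun v w => |g v - g w| ^ p) (fun v w => by rw [abs_sub_comm])]
  rw [mul_left_comm]
  apply mul_le_mul_of_nonneg_left _ (by norm_num : (0:ℝ) ≤ 2)
  rw [Finset.mul_sum]
  apply Finset.sum_le_sum
  intro v _
  rw [← Finset.sum_filter, ← Finset.sum_filter]
  have heq : ∑ w ∈ Finset.univ.filter (fun w => llt g v w), |g v - g w| ^ p
      = ∑ w ∈ Finset.univ.filter (fun w => llt g v w), (g v - g w) ^ p := by
    apply Finset.sum_congr rfl
    intro w hw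
    rw [abs_of_nonneg (sub_nonneg.mpr (llt_le (Finset.mem_filter.mp hw).2))]
  rw [heq]
  exact key_ineq hn hp g v

lemma part1 {n : ℕ} (hn : 2 ≤ n) {p : ℝ} (hp : 1 < p) (f : Fin n → ℝ) :
    vp (⊤ : SimpleGraph (Fin n)) p (mxHL ⊤ f) ≤ (1 - 1/(n:ℝ)) * vp ⊤ p f := by
  have hn0 : (0:ℝ) < n := by positivity
  have hn1 : (1:ℝ) ≤ (n:ℝ) := by exact_mod_cast Nat.one_le_of_lt hn
  have hp0 : (0:ℝ) ≤ p := by linarith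
  have hpne : p ≠ 0 := by linarith
  have hc : (1 - 1/(n:ℝ)) = ((n:ℝ)-1)/n := by field_simp
  have hc0 : (0:ℝ) ≤ ((n:ℝ)-1)/n := div_nonneg (by linarith) hn0.le
  set g : Fin n → ℝ := fun v => |f v| with hg
  have hM : mxHL (⊤ : SimpleGraph (Fin n)) f
      = fun e => max (g e) ((1/(n:ℝ)) * ∑ v, g v) :=
    funext fun e => mxHL_top f e
  rw [vp, vp, hM, hc]
  simp only [SimpleGraph.top_adj]
  set Sh : ℝ := ∑ v : Fin n, ∑ w : Fin n,
    (if v ≠ w then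
      |max (g v) ((1/(n:ℝ)) * ∑ u, g u) - max (g w) ((1/(n:ℝ)) * ∑ u, g u)| ^ p else 0)
    with hSh
  set Sf : ℝ := ∑ v : Fin n, ∑ w : Fin n, (if v ≠ w then |f v - f w| ^ p else 0) with hSf
  have hSf0 : 0 ≤ Sf := by
    apply Finset.sum_nonneg; intro v _; apply Finset.sum_nonneg; intro w _
    split
    · exact Real.rpow_nonneg (abs_nonneg _) p
    · exact le_rfl
  have hSh0 : 0 ≤ Sh := by
    apply Finset.sum_nonneg; intro v _; apply Finset.sum_nonneg; intro w _
    split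
    · exact Real.rpow_nonneg (abs_nonneg _) p
    · exact le_rfl
  have hgf : ∑ v : Fin n, ∑ w : Fin n, (if v ≠ w then |g v - g w| ^ p else 0) ≤ Sf := by
    apply Finset.sum_le_sum; intro v _; apply Finset.sum_le_sum; intro w _
    split
    · exact Real.rpow_le_rpow (abs_nonneg _) (abs_abs_sub_abs_le_abs_sub _ _) hp0
    · exact le_rfl
  have h1 : Sh ≤ (((n:ℝ)-1)/n) ^ p * Sf :=
    (main_sum hn hp g).trans (mul_le_mul_of_nonneg_left hgf (Real.rpow_nonneg hc0 p))
  have step : (1/2 : ℝ) * Sh ≤ (((n:ℝ)-1)/n) ^ p * ((1/2) * Sf) := by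
    have := mul_le_mul_of_nonneg_left h1 (by norm_num : (0:ℝ) ≤ 1/2)
    linarith [this]
  calc ((1/2:ℝ) * Sh) ^ (1/p)
      ≤ ((((n:ℝ)-1)/n) ^ p * ((1/2) * Sf)) ^ (1/p) :=
        Real.rpow_le_rpow (by linarith) step (by positivity)
    _ = (((n:ℝ)-1)/n) * ((1/2) * Sf) ^ (1/p) := by
        rw [Real.mul_rpow (Real.rpow_nonneg hc0 p) (by linarith : (0:ℝ) ≤ (1/2) * Sf)]
        congr 1
        rw [← Real.rpow_mul hc0, mul_one_div_cancel hpne, Real.rpow_one]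

lemma two_val_sum {n : ℕ} (hn : 1 ≤ n) {p : ℝ} (hpne : p ≠ 0) (a : Fin n) (b d : ℝ) :
    ∑ v : Fin n, ∑ w : Fin n,
        (if v ≠ w then |(if v = a then b else d) - (if w = a then b else d)| ^ p else 0)
      = 2 * ((n:ℝ) - 1) * |b - d| ^ p := by
  set K : ℝ := |b - d| ^ p with hK
  have key : ∀ v w : Fin n,
      (if v ≠ w then |(if v = a then b else d) - (if w = a then b else d)| ^ p else 0)
      = (if v = a then (if w = a then 0 else K) else (if w = a then K else 0)) := by
    intro v w
    by_cases hv : v = a <;> by_cases hw : w = a <;>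
      by_cases hvw : v = w <;>
      simp_all [Real.zero_rpow hpne, abs_sub_comm]
  simp_rw [key]
  have inner1 : ∑ w : Fin n, (if w = a then (0:ℝ) else K) = ((n:ℝ) - 1) * K := by
    have e : ∀ w : Fin n, (if w = a then (0:ℝ) else K) = K - (if w = a then K else 0) := by
      intro w; by_cases h : w = a <;> simp [h]
    rw [Finset.sum_congr rfl fun w _ => e w, Finset.sum_sub_distrib, Finset.sum_const,
      Finset.card_univ, Fintype.card_fin, nsmul_eq_mul, Finset.sum_ite_eq' Finset.univ a
      (fun _ => K), if_pos (Finset.mem_univ a)]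
    ring
  have inner2 : ∑ w : Fin n, (if w = a then K else (0:ℝ)) = K := by
    rw [Finset.sum_ite_eq' Finset.univ a (fun _ => K), if_pos (Finset.mem_univ a)]
  have outer : ∀ v : Fin n,
      (∑ w : Fin n, (if v = a then (if w = a then (0:ℝ) else K) else (if w = a then K else 0)))
      = if v = a then ((n:ℝ) - 1) * K else K := by
    intro v
    by_cases hv : v = a
    · simp only [hv, if_pos rfl]; exact inner1
    · simp only [if_neg hv]; exact inner2
  rw [Finset.sum_congr rfl fun v _ => outer v]
  have e : ∀ v : Fin n, (if v = a then ((n:ℝ) - 1) * K else K)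
      = K + (if v = a then ((n:ℝ) - 2) * K else 0) := by
    intro v; by_cases h : v = a <;> simp [h] <;> ring
  rw [Finset.sum_congr rfl fun v _ => e v, Finset.sum_add_distrib, Finset.sum_const,
    Finset.card_univ, Fintype.card_fin, nsmul_eq_mul, Finset.sum_ite_eq' Finset.univ a
    (fun _ => ((n:ℝ) - 2) * K), if_pos (Finset.mem_univ a)]
  ring

end Aux

/-- sharp bound for the `p`-variation of the Hardy–Littlewood maximal
operator on the complete graph `K_n`, for `p > 1`. -/
theorem completeGraph_var_sharp_p_gt_one (n : ℕ) (hn : 2 ≤ n) (p : ℝ) (hp : 1 < p) :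
    (∀ f : Fin n → ℝ,
        vp (⊤ : SimpleGraph (Fin n)) p (mxHL ⊤ f) ≤ (1 - 1 / (n : ℝ)) * vp ⊤ p f) ∧
    (0 < vp (⊤ : SimpleGraph (Fin n)) p
          (fun v => if v = ⟨1, by omega⟩ then (1 : ℝ) else 0) ∧
      vp (⊤ : SimpleGraph (Fin n)) p
          (mxHL ⊤ (fun v => if v = ⟨1, by omega⟩ then (1 : ℝ) else 0)) =
        (1 - 1 / (n : ℝ)) *
          vp (⊤ : SimpleGraph (Fin n)) p
            (fun v => if v = ⟨1, by omega⟩ then (1 : ℝ) else 0)) ∧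
    sSup {c : ℝ | ∃ f : Fin n → ℝ, 0 < vp (⊤ : SimpleGraph (Fin n)) p f ∧
        c = vp ⊤ p (mxHL ⊤ f) / vp ⊤ p f} = 1 - 1 / (n : ℝ) := by
  have hn0 : (0:ℝ) < n := by positivity
  have hn1 : (1:ℝ) ≤ (n:ℝ) := by exact_mod_cast Nat.one_le_of_lt hn
  have hn2 : (2:ℝ) ≤ (n:ℝ) := by exact_mod_cast hn
  have hp0 : (0:ℝ) ≤ p := by linarith
  have hpne : p ≠ 0 := by linarith
  have hc0 : (0:ℝ) ≤ 1 - 1/(n:ℝ) := by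
    have : 1/(n:ℝ) ≤ 1 := by rw [div_le_one hn0]; linarith
    linarith
  set a : Fin n := ⟨1, by omega⟩ with ha
  set δ : Fin n → ℝ := fun v => if v = a then (1 : ℝ) else 0 with hδ
  -- vp of δ
  have hvpδ : vp (⊤ : SimpleGraph (Fin n)) p δ = ((n:ℝ) - 1) ^ (1/p) := by
    rw [vp]
    simp only [SimpleGraph.top_adj, hδ]
    rw [two_val_sum (by omega) hpne a 1 0]
    norm_num
    congr 1
    ring
  have hvpδpos : 0 < vp (⊤ : SimpleGraph (Fin n)) p δ := by
    rw [hvpδ]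
    exact Real.rpow_pos_of_pos (by linarith) _
  -- maximal function of δ
  have hMδ : mxHL (⊤ : SimpleGraph (Fin n)) δ = fun v => if v = a then (1:ℝ) else 1/(n:ℝ) := by
    funext e
    rw [mxHL_top δ e]
    have hsum : ∑ v : Fin n, |δ v| = 1 := by
      have : ∀ v : Fin n, |δ v| = if v = a then (1:ℝ) else 0 := by
        intro v; rw [hδ]; by_cases h : v = a <;> simp [h]
      rw [Finset.sum_congr rfl fun v _ => this v,
        Finset.sum_ite_eq' Finset.univ a (fun _ => (1:ℝ)), if_pos (Finset.mem_univ a)]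
    rw [hsum, mul_one]
    by_cases h : e = a
    · rw [if_pos h]
      have habs : |δ e| = 1 := by rw [hδ]; simp [h]
      rw [habs]
      exact max_eq_left (by rw [div_le_one hn0]; linarith)
    · rw [if_neg h]
      have habs : |δ e| = 0 := by rw [hδ]; simp [h]
      rw [habs]
      exact max_eq_right (by positivity)
  -- vp of Mδ
  have hvpMδ : vp (⊤ : SimpleGraph (Fin n)) p (mxHL ⊤ δ)
      = (1 - 1/(n:ℝ)) * vp (⊤ : SimpleGraph (Fin n)) p δ := by
    rw [hMδ, hvpδ, vp]
    simp only [SimpleGraph.top_adj]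
    rw [two_val_sum (by omega) hpne a 1 (1/(n:ℝ))]
    have habs : |1 - 1/(n:ℝ)| = 1 - 1/(n:ℝ) := abs_of_nonneg hc0
    rw [habs]
    have e1 : (1/2 : ℝ) * (2 * ((n:ℝ) - 1) * (1 - 1/(n:ℝ)) ^ p)
        = (1 - 1/(n:ℝ)) ^ p * ((n:ℝ) - 1) := by ring
    rw [e1, Real.mul_rpow (Real.rpow_nonneg hc0 p) (by linarith : (0:ℝ) ≤ (n:ℝ) - 1),
      ← Real.rpow_mul hc0, mul_one_div_cancel hpne, Real.rpow_one]
  refine ⟨fun f => part1 hn hp f, ⟨hvpδpos, hvpMδ⟩, ?_⟩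
  -- the supremum
  have hub : ∀ x ∈ {c : ℝ | ∃ f : Fin n → ℝ, 0 < vp (⊤ : SimpleGraph (Fin n)) p f ∧
      c = vp ⊤ p (mxHL ⊤ f) / vp ⊤ p f}, x ≤ 1 - 1/(n:ℝ) := by
    rintro x ⟨f, hf, rfl⟩
    rw [div_le_iff₀ hf]
    exact part1 hn hp f
  have hmem : (1 - 1/(n:ℝ)) ∈ {c : ℝ | ∃ f : Fin n → ℝ,
      0 < vp (⊤ : SimpleGraph (Fin n)) p f ∧ c = vp ⊤ p (mxHL ⊤ f) / vp ⊤ p f} := by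
    refine ⟨δ, hvpδpos, ?_⟩
    rw [hvpMδ, mul_div_assoc, div_self (ne_of_gt hvpδpos), mul_one]
  exact le_antisymm (csSup_le ⟨_, hmem⟩ hub) (le_csSup ⟨_, hub⟩ hmem)
end

section
/- Let 0 < p ≤ 1. For every function f : V(K_4) → ℝ one has Var_p(M_{K_4} f) ≤ (3/4) · Var_p f. Moreover, equality holds for the delta function f = δ_{a_2}, so the best constant C_{K_4,p} := sup{ Var_p(M_{K_4} f)/Var_p f : f : V → ℝ, Var_p f > 0 } equals 3/4 = 1 − 1/4. -/
open scoped Classical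

/- ======================  auxiliary material  ====================== -/

set_option maxHeartbeats 1000000

section RpowTools
open Real
open scoped NNReal

lemma aux_rpow_chord {x p : ℝ} (hx : 0 ≤ x) (hp0 : 0 ≤ p) (hp1 : p ≤ 1) :
    x ^ p ≤ 1 + p * (x - 1) := by
  have h := Real.geom_mean_le_arith_mean2_weighted hp0 (by linarith : (0:ℝ) ≤ 1 - p) hx
    zero_le_one (by ring)
  rw [Real.one_rpow, mul_one] at h
  linarith

lemma aux_rpow_subadd {x y p : ℝ} (hx : 0 ≤ x) (hy : 0 ≤ y) (hp0 : 0 ≤ p) (hp1 : p ≤ 1) :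
    (x + y) ^ p ≤ x ^ p + y ^ p := by
  have h := NNReal.rpow_add_le_add_rpow (x.toNNReal) (y.toNNReal) hp0 hp1
  have h2 := NNReal.coe_le_coe.2 h
  rw [NNReal.coe_rpow] at h2
  push_cast [NNReal.coe_rpow, Real.coe_toNNReal x hx, Real.coe_toNNReal y hy] at h2
  exact h2

lemma aux_rpow_grad_gain {p B C U : ℝ} (hp0 : 0 < p) (hp1 : p ≤ 1) (hB : 0 ≤ B)
    (hBC : B ≤ C) (hCU : C ≤ U) (hU : 1 ≤ U) : p * (C - B) / U ≤ C ^ p - B ^ p := by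
  have hC0 : 0 ≤ C := hB.trans hBC
  have hU0 : (0:ℝ) < U := lt_of_lt_of_le one_pos hU
  rcases hC0.eq_or_lt with h | hC
  · have hBz : B = 0 := le_antisymm (hBC.trans h.symm.le) hB
    rw [← h, hBz]; simp
  · set q := B / C with hq
    have hq0 : 0 ≤ q := by positivity
    have hqC : q * C = B := div_mul_cancel₀ _ (ne_of_gt hC)
    have hchord := aux_rpow_chord (x := q) (p := p) hq0 hp0.le hp1
    have hBp : B ^ p = C ^ p * q ^ p := by
      rw [← Real.mul_rpow hC0 hq0, mul_comm C q, hqC]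
    have hCp : 0 < C ^ p := Real.rpow_pos_of_pos hC p
    have h2 : C ≤ C ^ p * U := by
      rcases le_total C 1 with hc1 | hc1
      · have h3 : C ^ (1:ℝ) ≤ C ^ p := Real.rpow_le_rpow_of_exponent_ge hC hc1 hp1
        rw [Real.rpow_one] at h3
        nlinarith
      · have h3 : (1:ℝ) ≤ C ^ p := Real.one_le_rpow hc1 hp0.le
        nlinarith
    have hq1 : q ≤ 1 := by rw [hq, div_le_one hC]; exact hBC
    have hA : p * (1 - q) ≤ 1 - q ^ p := by linarith
    have hpq0 : 0 ≤ p * (1 - q) := mul_nonneg hp0.le (by linarith)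
    have hB1 : C ^ p * U * (p * (1 - q)) ≤ C ^ p * U * (1 - q ^ p) :=
      mul_le_mul_of_nonneg_left hA (mul_nonneg hCp.le (le_of_lt hU0))
    have hB2 : C * (p * (1 - q)) ≤ C ^ p * U * (p * (1 - q)) :=
      mul_le_mul_of_nonneg_right h2 hpq0
    have hgoal1 : p * (C - B) = C * (p * (1 - q)) := by rw [← hqC]; ring
    have hgoal2 : (C ^ p - B ^ p) * U = C ^ p * U * (1 - q ^ p) := by rw [hBp]; ring
    rw [div_le_iff₀ hU0, hgoal1, hgoal2]
    linarith

lemma aux_rpow_34_lb {p : ℝ} (hp0 : 0 ≤ p) : 1 - p / 3 ≤ (3/4 : ℝ) ^ p := by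
  have hlog : Real.log (4/3) ≤ 1/3 := by
    rw [Real.log_le_iff_le_exp (by norm_num)]
    have h3 : Real.exp (1/3) ^ 3 = Real.exp 1 := by
      rw [← Real.exp_nat_mul]; norm_num
    nlinarith [Real.exp_one_gt_d9, Real.exp_pos (1/3:ℝ), sq_nonneg (Real.exp (1/3) - 4/3),
      sq_nonneg (Real.exp (1/3) + 4/3)]
  have hlog2 : -(1/3 : ℝ) ≤ Real.log (3/4) := by
    have h : Real.log (3/4) = -Real.log (4/3) := by
      rw [← Real.log_inv]; norm_num
    linarith [h]
  have hrw : (3/4 : ℝ) ^ p = Real.exp (Real.log (3/4) * p) :=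
    Real.rpow_def_of_pos (by norm_num) p
  rw [hrw]
  have h1 : Real.log (3/4) * p + 1 ≤ Real.exp (Real.log (3/4) * p) := Real.add_one_le_exp _
  nlinarith [mul_le_mul_of_nonneg_left hlog2 hp0]

lemma aux_rpow_loss {p B : ℝ} (hp0 : 0 < p) (hp1 : p ≤ 1) (hB0 : 0 ≤ B) (hB1 : B ≤ 1) :
    B ^ p - (3/4 : ℝ) ^ p * B ^ p ≤ p / 3 := by
  have hBp1 : B ^ p ≤ 1 := Real.rpow_le_one hB0 hB1 hp0.le
  have hBp0 : 0 ≤ B ^ p := Real.rpow_nonneg hB0 p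
  have h34 := aux_rpow_34_lb hp0.le
  nlinarith

lemma aux_rpow_loss_one {p C : ℝ} (hp0 : 0 < p) (hp1 : p ≤ 1) (hC0 : 0 < C) (hC1 : C ≤ 1) :
    1 - C ^ p ≤ p * (1 - C) / C := by
  have hchord := aux_rpow_chord (x := 1/C) (p := p) (by positivity) hp0.le hp1
  have hinv : (1/C : ℝ) ^ p = 1 / C ^ p := by
    rw [one_div, one_div]
    exact Real.inv_rpow hC0.le p
  have hCp : 0 < C ^ p := Real.rpow_pos_of_pos hC0 p
  have hCp1 : C ^ p ≤ 1 := Real.rpow_le_one hC0.le hC1 hp0.le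
  rw [hinv] at hchord
  have h2 : 1 ≤ C ^ p * (1 + p * (1/C - 1)) := by
    rw [div_le_iff₀ hCp] at hchord
    linarith [hchord]
  have h3 : C ^ p * (p * (1/C - 1)) ≤ p * (1/C - 1) := by
    have hfrac : 0 ≤ p * (1/C - 1) := by
      have h5 : 1 ≤ 1/C := by rw [le_div_iff₀ hC0]; linarith
      nlinarith
    nlinarith
  have h4 : p * (1/C - 1) = p * (1 - C)/C := by field_simp
  nlinarith

end RpowTools

section MasterIneq
open Real

lemma aux_caseI {p a b c : ℝ} (hp0 : 0 < p) (hp1 : p ≤ 1) (hab : a ≤ b) (hbc : b ≤ c)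
    (hc0 : c ≤ 0) (hsum : a + b + c + 1 = 0) :
    3 ≤ (3/4 : ℝ) ^ p * ((b - a) ^ p + (c - a) ^ p + (1 - a) ^ p
      + (c - b) ^ p + (1 - b) ^ p + (1 - c) ^ p) := by
  have ha13 : a ≤ -(1/3) := by linarith
  have hL0 : (0:ℝ) ≤ (3/4 : ℝ) ^ p := Real.rpow_nonneg (by norm_num) p
  have hconv : (3/4 : ℝ) ^ p * (1 - a) ^ p = ((3/4) * (1 - a)) ^ p :=
    (Real.mul_rpow (by norm_num) (by linarith)).symm
  have key1 : (1:ℝ) ≤ (3/4 : ℝ) ^ p * (1 - a) ^ p := by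
    rw [hconv]
    exact Real.one_le_rpow (by linarith) hp0.le
  have hsub2 : (1 - a : ℝ) ^ p ≤ (1 - b) ^ p + (b - a) ^ p := by
    have h := aux_rpow_subadd (x := 1 - b) (y := b - a) (by linarith) (by linarith) hp0.le hp1
    have he : (1 - b) + (b - a) = 1 - a := by ring
    rwa [he] at h
  have hsub3 : (1 - a : ℝ) ^ p ≤ (1 - c) ^ p + (c - a) ^ p := by
    have h := aux_rpow_subadd (x := 1 - c) (y := c - a) (by linarith) (by linarith) hp0.le hp1
    have he : (1 - c) + (c - a) = 1 - a := by ring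
    rwa [he] at h
  have key2 := mul_le_mul_of_nonneg_left hsub2 hL0
  have key3 := mul_le_mul_of_nonneg_left hsub3 hL0
  have hnn : 0 ≤ (3/4 : ℝ) ^ p * (c - b) ^ p :=
    mul_nonneg hL0 (Real.rpow_nonneg (by linarith) p)
  rw [mul_add] at key2 key3
  rw [mul_add, mul_add, mul_add, mul_add, mul_add]
  linarith [key1, key2, key3, hnn]

lemma aux_caseII {p t x : ℝ} (hp0 : 0 < p) (hp1 : p ≤ 1) (ht0 : 0 ≤ t) (ht1 : t ≤ 1)
    (hx0 : 0 ≤ x) (hx2 : 2 * x ≤ 1 + t) :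
    2 * t ^ p + 2 + (1 - t) ^ p ≤ (3/4 : ℝ) ^ p * ((1 + t - 2*x) ^ p + (1 + 2*t - x) ^ p
      + (2 + t - x) ^ p + (t + x) ^ p + (1 + x) ^ p + (1 - t) ^ p) := by
  have hL0 : (0:ℝ) ≤ (3/4 : ℝ) ^ p := Real.rpow_nonneg (by norm_num) p
  have hS : (1 + 2*t - x : ℝ) ^ p ≤ (t + x) ^ p + (1 + t - 2*x) ^ p := by
    have h := aux_rpow_subadd (x := t + x) (y := 1 + t - 2*x) (by linarith) (by linarith)
      hp0.le hp1
    have he : (t + x) + (1 + t - 2*x) = 1 + 2*t - x := by ring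
    rwa [he] at h
  have hconv1 : (3/4 : ℝ) ^ p * (1 + 2*t - x) ^ p = ((3/4) * (1 + 2*t - x)) ^ p :=
    (Real.mul_rpow (by norm_num) (by linarith)).symm
  have hconv2 : (3/4 : ℝ) ^ p * (2 + t - x) ^ p = ((3/4) * (2 + t - x)) ^ p :=
    (Real.mul_rpow (by norm_num) (by linarith)).symm
  have hconv3 : (3/4 : ℝ) ^ p * (1 + x) ^ p = ((3/4) * (1 + x)) ^ p :=
    (Real.mul_rpow (by norm_num) (by linarith)).symm
  have hS2 := mul_le_mul_of_nonneg_left hS hL0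
  rw [hconv1, mul_add] at hS2
  have g1 : p * ((3/4) * (1 + 2*t - x) - t) / (9/4) ≤ ((3/4) * (1 + 2*t - x)) ^ p - t ^ p :=
    aux_rpow_grad_gain hp0 hp1 ht0 (by linarith) (by linarith) (by norm_num)
  have g2 : p * ((3/4) * (2 + t - x) - 1) / (9/4) ≤ ((3/4) * (2 + t - x)) ^ p - 1 ^ p :=
    aux_rpow_grad_gain hp0 hp1 (by norm_num) (by linarith) (by linarith) (by norm_num)
  rw [Real.one_rpow] at g2
  have l1 : (1 - t) ^ p - (3/4 : ℝ) ^ p * (1 - t) ^ p ≤ p / 3 :=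
    aux_rpow_loss hp0 hp1 (by linarith) (by linarith)
  rcases le_or_gt x (1/3) with hx13 | hx13
  · have lx : 1 - ((3/4) * (1 + x)) ^ p ≤ p * (1/3 - x) := by
      have h := aux_rpow_loss_one (C := (3/4) * (1 + x)) hp0 hp1 (by linarith) (by linarith)
      have h2 : p * (1 - (3/4) * (1 + x)) / ((3/4) * (1 + x)) ≤ p * (1/3 - x) := by
        rw [div_le_iff₀ (by linarith : (0:ℝ) < (3/4) * (1 + x))]
        nlinarith [mul_nonneg (mul_nonneg hp0.le hx0) (sub_nonneg.2 hx13)]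
      linarith
    have hkey : p * ((3/4) * (1 + 2*t - x) - t) / (9/4) + p * ((3/4) * (1 + 2*t - x) - t) / (9/4)
        + p * ((3/4) * (2 + t - x) - 1) / (9/4) - p * (1/3 - x) - p / 3
        = p * (2/9 + 7*t/9) := by ring
    have hpos : 0 ≤ p * (2/9 + 7*t/9) := mul_nonneg hp0.le (by linarith)
    rw [mul_add, mul_add, mul_add, mul_add, mul_add, hconv1, hconv2, hconv3]
    linarith [hS2, g1, g2, lx, l1, hkey, hpos]
  · have lx : (1:ℝ) ≤ ((3/4) * (1 + x)) ^ p :=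
      Real.one_le_rpow (by linarith) hp0.le
    have hkey : p * ((3/4) * (1 + 2*t - x) - t) / (9/4) + p * ((3/4) * (1 + 2*t - x) - t) / (9/4)
        + p * ((3/4) * (2 + t - x) - 1) / (9/4) - p / 3
        = p * (5/9 + 7*t/9 - x) := by ring
    have hpos : 0 ≤ p * (5/9 + 7*t/9 - x) := mul_nonneg hp0.le (by linarith)
    rw [mul_add, mul_add, mul_add, mul_add, mul_add, hconv1, hconv2, hconv3]
    linarith [hS2, g1, g2, lx, l1, hkey, hpos]

lemma aux_caseIII {p s t : ℝ} (hp0 : 0 < p) (hp1 : p ≤ 1) (hs0 : 0 ≤ s) (hst : s ≤ t)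
    (ht1 : t ≤ 1) :
    s ^ p + t ^ p + 1 + (t - s) ^ p + (1 - s) ^ p + (1 - t) ^ p ≤
    (3/4 : ℝ) ^ p * ((1 + 2*s + t) ^ p + (1 + s + 2*t) ^ p + (2 + s + t) ^ p
      + (t - s) ^ p + (1 - s) ^ p + (1 - t) ^ p) := by
  have hL0 : (0:ℝ) ≤ (3/4 : ℝ) ^ p := Real.rpow_nonneg (by norm_num) p
  have hconv1 : (3/4 : ℝ) ^ p * (1 + 2*s + t) ^ p = ((3/4) * (1 + 2*s + t)) ^ p :=
    (Real.mul_rpow (by norm_num) (by linarith)).symm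
  have hconv2 : (3/4 : ℝ) ^ p * (1 + s + 2*t) ^ p = ((3/4) * (1 + s + 2*t)) ^ p :=
    (Real.mul_rpow (by norm_num) (by linarith)).symm
  have hconv3 : (3/4 : ℝ) ^ p * (2 + s + t) ^ p = ((3/4) * (2 + s + t)) ^ p :=
    (Real.mul_rpow (by norm_num) (by linarith)).symm
  have l1 : (t - s) ^ p - (3/4 : ℝ) ^ p * (t - s) ^ p ≤ p / 3 :=
    aux_rpow_loss hp0 hp1 (by linarith) (by linarith)
  have l2 : (1 - s) ^ p - (3/4 : ℝ) ^ p * (1 - s) ^ p ≤ p / 3 :=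
    aux_rpow_loss hp0 hp1 (by linarith) (by linarith)
  have l3 : (1 - t) ^ p - (3/4 : ℝ) ^ p * (1 - t) ^ p ≤ p / 3 :=
    aux_rpow_loss hp0 hp1 (by linarith) (by linarith)
  rcases le_or_gt t (1/2) with ht12 | ht12
  · have g1 : p * ((3/4) * (1 + 2*s + t) - s) / (15/8) ≤ ((3/4) * (1 + 2*s + t)) ^ p - s ^ p :=
      aux_rpow_grad_gain hp0 hp1 hs0 (by linarith) (by linarith) (by norm_num)
    have g2 : p * ((3/4) * (1 + s + 2*t) - t) / (15/8) ≤ ((3/4) * (1 + s + 2*t)) ^ p - t ^ p :=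
      aux_rpow_grad_gain hp0 hp1 (by linarith) (by linarith) (by linarith) (by norm_num)
    have g3 : p * ((3/4) * (2 + s + t) - 1) / (9/4) ≤ ((3/4) * (2 + s + t)) ^ p - 1 ^ p :=
      aux_rpow_grad_gain hp0 hp1 (by norm_num) (by linarith) (by linarith) (by norm_num)
    rw [Real.one_rpow] at g3
    have hkey : p * ((3/4) * (1 + 2*s + t) - s) / (15/8) + p * ((3/4) * (1 + s + 2*t) - t) / (15/8)
        + p * ((3/4) * (2 + s + t) - 1) / (9/4) - p/3 - p/3 - p/3
        = p * (1/45 + s + t) := by ring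
    have hpos : 0 ≤ p * (1/45 + s + t) := mul_nonneg hp0.le (by linarith)
    rw [mul_add, mul_add, mul_add, mul_add, mul_add, hconv1, hconv2, hconv3]
    linarith [g1, g2, g3, l1, l2, l3, hkey, hpos]
  rcases le_or_gt t (3/4) with ht34 | ht34
  · have g1 : p * ((3/4) * (1 + 2*s + t) - s) / (39/16) ≤ ((3/4) * (1 + 2*s + t)) ^ p - s ^ p :=
      aux_rpow_grad_gain hp0 hp1 hs0 (by linarith) (by linarith) (by norm_num)
    have g2 : p * ((3/4) * (1 + s + 2*t) - t) / (39/16) ≤ ((3/4) * (1 + s + 2*t)) ^ p - t ^ p :=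
      aux_rpow_grad_gain hp0 hp1 (by linarith) (by linarith) (by linarith) (by norm_num)
    have g3 : p * ((3/4) * (2 + s + t) - 1) / (21/8) ≤ ((3/4) * (2 + s + t)) ^ p - 1 ^ p :=
      aux_rpow_grad_gain hp0 hp1 (by norm_num) (by linarith) (by linarith) (by norm_num)
    rw [Real.one_rpow] at g3
    have hkey : p * ((3/4) * (1 + 2*s + t) - s) / (39/16) + p * ((3/4) * (1 + s + 2*t) - t) / (39/16)
        + p * ((3/4) * (2 + s + t) - 1) / (21/8) - p/3 - p/3 - p/3
        = p * (-53/273 + (218/273) * (s + t)) := by ring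
    have hpos : 0 ≤ p * (-53/273 + (218/273) * (s + t)) := mul_nonneg hp0.le (by linarith)
    rw [mul_add, mul_add, mul_add, mul_add, mul_add, hconv1, hconv2, hconv3]
    linarith [g1, g2, g3, l1, l2, l3, hkey, hpos]
  · have g1 : p * ((3/4) * (1 + 2*s + t) - s) / 3 ≤ ((3/4) * (1 + 2*s + t)) ^ p - s ^ p :=
      aux_rpow_grad_gain hp0 hp1 hs0 (by linarith) (by linarith) (by norm_num)
    have g2 : p * ((3/4) * (1 + s + 2*t) - t) / 3 ≤ ((3/4) * (1 + s + 2*t)) ^ p - t ^ p :=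
      aux_rpow_grad_gain hp0 hp1 (by linarith) (by linarith) (by linarith) (by norm_num)
    have g3 : p * ((3/4) * (2 + s + t) - 1) / 3 ≤ ((3/4) * (2 + s + t)) ^ p - 1 ^ p :=
      aux_rpow_grad_gain hp0 hp1 (by norm_num) (by linarith) (by linarith) (by norm_num)
    rw [Real.one_rpow] at g3
    have hkey : p * ((3/4) * (1 + 2*s + t) - s) / 3 + p * ((3/4) * (1 + s + 2*t) - t) / 3
        + p * ((3/4) * (2 + s + t) - 1) / 3 - p/3 - p/3 - p/3
        = p * (-1/3 + (2/3) * (s + t)) := by ring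
    have hpos : 0 ≤ p * (-1/3 + (2/3) * (s + t)) := mul_nonneg hp0.le (by linarith)
    rw [mul_add, mul_add, mul_add, mul_add, mul_add, hconv1, hconv2, hconv3]
    linarith [g1, g2, g3, l1, l2, l3, hkey, hpos]

/-- Master inequality on normalized excesses. -/
lemma aux_master {p a b c : ℝ} (hp0 : 0 < p) (hp1 : p ≤ 1)
    (hab : a ≤ b) (hbc : b ≤ c) (hc1 : c ≤ 1) (hsum : a + b + c + 1 = 0) :
    (max b 0 - max a 0) ^ p + (max c 0 - max a 0) ^ p + (1 - max a 0) ^ p +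
      (max c 0 - max b 0) ^ p + (1 - max b 0) ^ p + (1 - max c 0) ^ p ≤
    (3/4 : ℝ) ^ p * ((b - a) ^ p + (c - a) ^ p + (1 - a) ^ p +
      (c - b) ^ p + (1 - b) ^ p + (1 - c) ^ p) := by
  have ha0 : a ≤ 0 := by linarith
  have hmaxa : max a 0 = 0 := max_eq_right ha0
  rcases le_or_gt c 0 with hc0 | hc0
  · have hb0 : b ≤ 0 := by linarith
    rw [hmaxa, max_eq_right hb0, max_eq_right hc0]
    have h := aux_caseI hp0 hp1 hab hbc hc0 hsum
    rw [show (0:ℝ) - 0 = 0 by ring, show (1:ℝ) - 0 = 1 by ring,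
      Real.zero_rpow hp0.ne', Real.one_rpow]
    linarith
  rcases le_or_gt b 0 with hb0 | hb0
  · rw [hmaxa, max_eq_right hb0, max_eq_left hc0.le]
    rw [show (0:ℝ) - 0 = 0 by ring, show c - 0 = c by ring, show (1:ℝ) - 0 = 1 by ring,
      Real.zero_rpow hp0.ne', Real.one_rpow]
    have h := aux_caseII (t := c) (x := -b) hp0 hp1 hc0.le hc1 (by linarith) (by linarith)
    rw [show (1 + c - 2 * -b : ℝ) = b - a by linarith, show (1 + 2*c - -b : ℝ) = c - a by linarith,
      show (2 + c - -b : ℝ) = 1 - a by linarith, show (c + -b : ℝ) = c - b by ring,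
      show (1 + -b : ℝ) = 1 - b by ring] at h
    linarith
  · rw [hmaxa, max_eq_left hb0.le, max_eq_left (by linarith : (0:ℝ) ≤ c)]
    rw [show (1:ℝ) - 0 = 1 by ring, show b - 0 = b by ring, show c - 0 = c by ring,
      Real.one_rpow]
    have h := aux_caseIII (s := b) (t := c) hp0 hp1 hb0.le hbc hc1
    rw [show (1 + 2*b + c : ℝ) = b - a by linarith, show (1 + b + 2*c : ℝ) = c - a by linarith,
      show (2 + b + c : ℝ) = 1 - a by linarith] at h
    linarith

lemma aux_sorted_ineq {p : ℝ} (hp0 : 0 < p) (hp1 : p ≤ 1) {g0 g1 g2 g3 A : ℝ}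
    (h01 : g0 ≤ g1) (h12 : g1 ≤ g2) (h23 : g2 ≤ g3)
    (hA : g0 + g1 + g2 + g3 = 4 * A) :
    (max g1 A - max g0 A) ^ p + (max g2 A - max g0 A) ^ p + (max g3 A - max g0 A) ^ p +
      (max g2 A - max g1 A) ^ p + (max g3 A - max g1 A) ^ p + (max g3 A - max g2 A) ^ p ≤
    (3/4 : ℝ) ^ p * ((g1 - g0) ^ p + (g2 - g0) ^ p + (g3 - g0) ^ p +
      (g2 - g1) ^ p + (g3 - g1) ^ p + (g3 - g2) ^ p) := by
  have hAle : A ≤ g3 := by linarith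
  rcases hAle.eq_or_lt with hEq | hlt
  · have e0 : g0 = A := by linarith
    have e1 : g1 = A := by linarith
    have e2 : g2 = A := by linarith
    have e3 : g3 = A := by linarith
    rw [e0, e1, e2, e3, max_self, sub_self, Real.zero_rpow hp0.ne']
    norm_num
  · set σ : ℝ := g3 - A with hσdef
    have hσ0 : 0 < σ := by linarith
    set a : ℝ := (g0 - A) / σ with hadef
    set b : ℝ := (g1 - A) / σ with hbdef
    set c : ℝ := (g2 - A) / σ with hcdef
    have hab : a ≤ b := by rw [hadef, hbdef]; gcongr
    have hbc : b ≤ c := by rw [hbdef, hcdef]; gcongr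
    have hc1 : c ≤ 1 := by
      rw [hcdef, div_le_one hσ0]; linarith
    have hsum : a + b + c + 1 = 0 := by
      rw [hadef, hbdef, hcdef]
      field_simp
      linarith
    have key : ∀ u : ℝ, max u A = A + σ * max ((u - A) / σ) 0 := by
      intro u
      rcases le_total u A with h | h
      · rw [max_eq_right h, max_eq_right (by
          apply div_nonpos_of_nonpos_of_nonneg <;> linarith)]
        ring
      · rw [max_eq_left h, max_eq_left (div_nonneg (by linarith) hσ0.le)]
        field_simp; ring
    have k0 : max g0 A = A + σ * max a 0 := key g0
    have k1 : max g1 A = A + σ * max b 0 := key g1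
    have k2 : max g2 A = A + σ * max c 0 := key g2
    have k3 : max g3 A = A + σ * 1 := by
      rw [key g3, ← hσdef, div_self hσ0.ne', max_eq_left zero_le_one]
    have ha1 : a ≤ 1 := le_trans (hab.trans hbc) hc1
    have m01 : (0:ℝ) ≤ max b 0 - max a 0 := by
      have := max_le_max hab (le_refl (0:ℝ)); linarith
    have m02 : (0:ℝ) ≤ max c 0 - max a 0 := by
      have := max_le_max (hab.trans hbc) (le_refl (0:ℝ)); linarith
    have m03 : (0:ℝ) ≤ 1 - max a 0 := by
      have : max a 0 ≤ 1 := max_le ha1 zero_le_one; linarith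
    have m12 : (0:ℝ) ≤ max c 0 - max b 0 := by
      have := max_le_max hbc (le_refl (0:ℝ)); linarith
    have m13 : (0:ℝ) ≤ 1 - max b 0 := by
      have : max b 0 ≤ 1 := max_le (hbc.trans hc1) zero_le_one; linarith
    have m23 : (0:ℝ) ≤ 1 - max c 0 := by
      have : max c 0 ≤ 1 := max_le hc1 zero_le_one; linarith
    have t1 : max g1 A - max g0 A = σ * (max b 0 - max a 0) := by rw [k1, k0]; ring
    have t2 : max g2 A - max g0 A = σ * (max c 0 - max a 0) := by rw [k2, k0]; ring
    have t3 : max g3 A - max g0 A = σ * (1 - max a 0) := by rw [k3, k0]; ring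
    have t4 : max g2 A - max g1 A = σ * (max c 0 - max b 0) := by rw [k2, k1]; ring
    have t5 : max g3 A - max g1 A = σ * (1 - max b 0) := by rw [k3, k1]; ring
    have t6 : max g3 A - max g2 A = σ * (1 - max c 0) := by rw [k3, k2]; ring
    have r1 : g1 - g0 = σ * (b - a) := by rw [hbdef, hadef]; field_simp; ring
    have r2 : g2 - g0 = σ * (c - a) := by rw [hcdef, hadef]; field_simp; ring
    have r3 : g3 - g0 = σ * (1 - a) := by rw [hadef]; field_simp; linarith [hσdef]
    have r4 : g2 - g1 = σ * (c - b) := by rw [hcdef, hbdef]; field_simp; ring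
    have r5 : g3 - g1 = σ * (1 - b) := by rw [hbdef]; field_simp; linarith [hσdef]
    have r6 : g3 - g2 = σ * (1 - c) := by rw [hcdef]; field_simp; linarith [hσdef]
    rw [t1, t2, t3, t4, t5, t6, r1, r2, r3, r4, r5, r6]
    rw [Real.mul_rpow hσ0.le m01, Real.mul_rpow hσ0.le m02, Real.mul_rpow hσ0.le m03,
      Real.mul_rpow hσ0.le m12, Real.mul_rpow hσ0.le m13, Real.mul_rpow hσ0.le m23,
      Real.mul_rpow hσ0.le (by linarith : (0:ℝ) ≤ b - a),
      Real.mul_rpow hσ0.le (by linarith : (0:ℝ) ≤ c - a),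
      Real.mul_rpow hσ0.le (by linarith : (0:ℝ) ≤ 1 - a),
      Real.mul_rpow hσ0.le (by linarith : (0:ℝ) ≤ c - b),
      Real.mul_rpow hσ0.le (by linarith : (0:ℝ) ≤ 1 - b),
      Real.mul_rpow hσ0.le (by linarith : (0:ℝ) ≤ 1 - c)]
    have hm := aux_master hp0 hp1 hab hbc hc1 hsum
    have hmul := mul_le_mul_of_nonneg_left hm (Real.rpow_nonneg hσ0.le p)
    ring_nf at hmul ⊢
    linarith [hmul]

end MasterIneq

section GraphLemmas
open Real

/-- normalized double sum with a fixed decidability instance. -/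
noncomputable def QQ (p : ℝ) (h : Fin 4 → ℝ) : ℝ :=
  ∑ v : Fin 4, ∑ w : Fin 4, if v ≠ w then |h v - h w| ^ p else 0

lemma aux_vp_eq (p : ℝ) (h : Fin 4 → ℝ) :
    vp (⊤ : SimpleGraph (Fin 4)) p h = ((1/2) * QQ p h) ^ (1/p) := by
  unfold vp QQ
  simp only [SimpleGraph.top_adj]

lemma aux_gball_zero (e : Fin 4) : gball (⊤ : SimpleGraph (Fin 4)) e 0 = {e} := by
  ext m
  simp only [gball, Finset.mem_filter, Finset.mem_univ, true_and, Finset.mem_singleton,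
    Nat.le_zero]
  constructor
  · rintro ⟨hr, hd⟩
    exact ((hr.dist_eq_zero_iff).1 hd).symm
  · rintro rfl
    refine ⟨SimpleGraph.Reachable.refl _, ?_⟩
    simp [SimpleGraph.dist_self]

lemma aux_top_reachable (e m : Fin 4) : (⊤ : SimpleGraph (Fin 4)).Reachable e m := by
  by_cases h : e = m
  · exact h ▸ SimpleGraph.Reachable.refl _
  · exact (SimpleGraph.Adj.reachable (by simp [h]))

lemma aux_gball_succ (e : Fin 4) (r : ℕ) :
    gball (⊤ : SimpleGraph (Fin 4)) e (r + 1) = Finset.univ := by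
  ext m
  simp only [gball, Finset.mem_filter, Finset.mem_univ, true_and, iff_true]
  refine ⟨aux_top_reachable e m, ?_⟩
  by_cases h : e = m
  · subst h; simp [SimpleGraph.dist_self]
  · have hd : (⊤ : SimpleGraph (Fin 4)).dist e m = 1 :=
      (SimpleGraph.dist_eq_one_iff_adj).2 (by simp [h])
    omega

lemma aux_mxHL_top (f : Fin 4 → ℝ) (e : Fin 4) :
    mxHL (⊤ : SimpleGraph (Fin 4)) f e = max |f e| ((∑ m : Fin 4, |f m|) / 4) := by
  set u : ℕ → ℝ := fun r => (1 / ((gball (⊤ : SimpleGraph (Fin 4)) e r).card : ℝ)) *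
    ∑ m ∈ gball (⊤ : SimpleGraph (Fin 4)) e r, |f m| with hu
  have hu0 : u 0 = |f e| := by
    simp [hu, aux_gball_zero]
  have husucc : ∀ r : ℕ, u (r + 1) = (∑ m : Fin 4, |f m|) / 4 := by
    intro r
    simp only [hu, aux_gball_succ]
    rw [show ((Finset.univ : Finset (Fin 4)).card : ℝ) = 4 by simp]
    ring
  have hbdd : BddAbove (Set.range u) := by
    refine ⟨max (u 0) (u 1), ?_⟩
    rintro y ⟨r, rfl⟩
    cases r with
    | zero => exact le_max_left _ _
    | succ n => rw [husucc n, ← husucc 0]; exact le_max_right _ _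
  have hdef : mxHL (⊤ : SimpleGraph (Fin 4)) f e = ⨆ r : ℕ, u r := rfl
  rw [hdef]
  apply le_antisymm
  · apply ciSup_le
    intro r
    cases r with
    | zero => rw [hu0]; exact le_max_left _ _
    | succ n => rw [husucc n]; exact le_max_right _ _
  · apply max_le
    · rw [← hu0]; exact le_ciSup hbdd 0
    · rw [← husucc 0]; exact le_ciSup hbdd 1

lemma aux_Qexpand (p : ℝ) (h : Fin 4 → ℝ) :
    QQ p h = 2 * (|h 1 - h 0| ^ p + (|h 2 - h 0| ^ p + (|h 3 - h 0| ^ p +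
      (|h 2 - h 1| ^ p + (|h 3 - h 1| ^ p + |h 3 - h 2| ^ p))))) := by
  unfold QQ
  simp only [Fin.sum_univ_four, ne_eq]
  norm_num [Fin.ext_iff, show ((3:Fin 4):ℕ) = 3 from rfl]
  rw [abs_sub_comm (h 0) (h 1), abs_sub_comm (h 0) (h 2), abs_sub_comm (h 0) (h 3),
    abs_sub_comm (h 1) (h 2), abs_sub_comm (h 1) (h 3), abs_sub_comm (h 2) (h 3)]
  ring

lemma aux_Qperm (p : ℝ) (h : Fin 4 → ℝ) (σ : Equiv.Perm (Fin 4)) :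
    QQ p (fun v => h (σ v)) = QQ p h := by
  unfold QQ
  set F : Fin 4 → Fin 4 → ℝ :=
    fun a b => if a ≠ b then |h a - h b| ^ p else 0 with hF
  have hcond : ∀ v w : Fin 4,
      (if v ≠ w then |h (σ v) - h (σ w)| ^ p else 0) = F (σ v) (σ w) := by
    intro v w
    simp only [hF, ne_eq, EmbeddingLike.apply_eq_iff_eq]
  calc (∑ v : Fin 4, ∑ w : Fin 4, if v ≠ w then |h (σ v) - h (σ w)| ^ p else 0)
      = ∑ v : Fin 4, ∑ w : Fin 4, F (σ v) (σ w) := by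
        apply Finset.sum_congr rfl; intro v _; apply Finset.sum_congr rfl; intro w _
        exact hcond v w
    _ = ∑ v : Fin 4, ∑ w : Fin 4, F (σ v) w := by
        apply Finset.sum_congr rfl; intro v _
        exact Equiv.sum_comp σ (F (σ v))
    _ = ∑ v : Fin 4, ∑ w : Fin 4, F v w := Equiv.sum_comp σ (fun v => ∑ w : Fin 4, F v w)

lemma aux_Qnonneg (p : ℝ) (h : Fin 4 → ℝ) : 0 ≤ QQ p h := by
  unfold QQ
  apply Finset.sum_nonneg; intro v _
  apply Finset.sum_nonneg; intro w _
  split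
  · exact Real.rpow_nonneg (abs_nonneg _) _
  · exact le_rfl

lemma aux_Qmono {p : ℝ} (hp0 : 0 < p) (f : Fin 4 → ℝ) :
    QQ p (fun v => |f v|) ≤ QQ p f := by
  unfold QQ
  apply Finset.sum_le_sum; intro v _
  apply Finset.sum_le_sum; intro w _
  split
  · exact Real.rpow_le_rpow (abs_nonneg _) (abs_abs_sub_abs_le_abs_sub _ _) hp0.le
  · exact le_rfl

lemma aux_vp_wrap {p : ℝ} (hp0 : 0 < p) (h1 h2 : Fin 4 → ℝ)
    (hQ : QQ p h1 ≤ (3/4 : ℝ) ^ p * QQ p h2) :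
    vp (⊤ : SimpleGraph (Fin 4)) p h1 ≤ (3/4 : ℝ) * vp (⊤ : SimpleGraph (Fin 4)) p h2 := by
  rw [aux_vp_eq p h1, aux_vp_eq p h2]
  have hn1 := aux_Qnonneg p h1
  have hn2 := aux_Qnonneg p h2
  calc ((1/2 : ℝ) * QQ p h1) ^ (1/p)
      ≤ ((3/4 : ℝ) ^ p * ((1/2) * QQ p h2)) ^ (1/p) := by
        apply Real.rpow_le_rpow (by linarith) (by linarith) (by positivity)
    _ = (3/4 : ℝ) * ((1/2) * QQ p h2) ^ (1/p) := by
        rw [Real.mul_rpow (Real.rpow_nonneg (by norm_num) p) (by linarith),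
          ← Real.rpow_mul (by norm_num : (0:ℝ) ≤ 3/4), mul_one_div, div_self hp0.ne',
          Real.rpow_one]

/-- main inequality: part 1. -/
lemma aux_main {p : ℝ} (hp0 : 0 < p) (hp1 : p ≤ 1) (f : Fin 4 → ℝ) :
    vp (⊤ : SimpleGraph (Fin 4)) p (mxHL ⊤ f) ≤ (3/4 : ℝ) * vp ⊤ p f := by
  set g : Fin 4 → ℝ := fun v => |f v| with hgdef
  set A : ℝ := (∑ m : Fin 4, |f m|) / 4 with hAdef
  have hM : mxHL (⊤ : SimpleGraph (Fin 4)) f = fun e => max (g e) A :=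
    funext fun e => aux_mxHL_top f e
  rw [hM]
  apply aux_vp_wrap hp0
  set σ : Equiv.Perm (Fin 4) := Tuple.sort g with hσdef
  set k : Fin 4 → ℝ := fun v => g (σ v) with hkdef
  have hkmono : Monotone k := fun i j hij => Tuple.monotone_sort g hij
  have hk01 : k 0 ≤ k 1 := hkmono (by decide)
  have hk12 : k 1 ≤ k 2 := hkmono (by decide)
  have hk23 : k 2 ≤ k 3 := hkmono (by decide)
  have hkA : k 0 + k 1 + k 2 + k 3 = 4 * A := by
    have h1 : ∑ m : Fin 4, g (σ m) = ∑ m : Fin 4, g m := Equiv.sum_comp σ g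
    have h2 : ∑ m : Fin 4, g (σ m) = k 0 + k 1 + k 2 + k 3 := by
      rw [Fin.sum_univ_four]
    have h3 : ∑ m : Fin 4, g m = 4 * A := by
      rw [hAdef, hgdef]; ring
    rw [← h2, h1, h3]
  have e1 : QQ p (fun e => max (g e) A) = QQ p (fun e => max (k e) A) :=
    (aux_Qperm p (fun e => max (g e) A) σ).symm
  have e3 : QQ p g = QQ p k := (aux_Qperm p g σ).symm
  have e2 : QQ p (fun e => max (k e) A) = 2 * (|max (k 1) A - max (k 0) A| ^ p +
      (|max (k 2) A - max (k 0) A| ^ p + (|max (k 3) A - max (k 0) A| ^ p +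
      (|max (k 2) A - max (k 1) A| ^ p + (|max (k 3) A - max (k 1) A| ^ p +
      |max (k 3) A - max (k 2) A| ^ p))))) := aux_Qexpand p _
  have e4 := aux_Qexpand p k
  have habs : ∀ i j : Fin 4, k i ≤ k j →
      |max (k j) A - max (k i) A| = max (k j) A - max (k i) A := by
    intro i j hij
    exact abs_of_nonneg (sub_nonneg.2 (max_le_max hij le_rfl))
  have hbbs : ∀ i j : Fin 4, k i ≤ k j → |k j - k i| = k j - k i := by
    intro i j hij
    exact abs_of_nonneg (sub_nonneg.2 hij)
  rw [habs 0 1 hk01, habs 0 2 (hk01.trans hk12), habs 0 3 ((hk01.trans hk12).trans hk23),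
    habs 1 2 hk12, habs 1 3 (hk12.trans hk23), habs 2 3 hk23] at e2
  rw [hbbs 0 1 hk01, hbbs 0 2 (hk01.trans hk12), hbbs 0 3 ((hk01.trans hk12).trans hk23),
    hbbs 1 2 hk12, hbbs 1 3 (hk12.trans hk23), hbbs 2 3 hk23] at e4
  have core := aux_sorted_ineq hp0 hp1 hk01 hk12 hk23 hkA
  have hQgk : QQ p (fun e => max (g e) A) ≤ (3/4 : ℝ) ^ p * QQ p g := by
    rw [e1, e2, e3, e4]
    linarith [core]
  have hQmono := aux_Qmono hp0 f
  have hL0 : (0:ℝ) ≤ (3/4 : ℝ) ^ p := Real.rpow_nonneg (by norm_num) p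
  calc QQ p (fun e => max (g e) A) ≤ (3/4 : ℝ) ^ p * QQ p g := hQgk
    _ ≤ (3/4 : ℝ) ^ p * QQ p f := mul_le_mul_of_nonneg_left hQmono hL0

end GraphLemmas

section DeltaComputation
open Real

lemma aux_vp_delta {p : ℝ} (hp0 : 0 < p) :
    vp (⊤ : SimpleGraph (Fin 4)) p (fun v => if v = 1 then (1:ℝ) else 0) = 3 ^ (1/p) := by
  rw [aux_vp_eq, aux_Qexpand]
  norm_num [show (0:Fin 4) ≠ 1 from by decide, show (2:Fin 4) ≠ 1 from by decide,
    show (3:Fin 4) ≠ 1 from by decide, Real.zero_rpow hp0.ne', Real.one_rpow]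

lemma aux_vp_Mdelta {p : ℝ} (hp0 : 0 < p) :
    vp (⊤ : SimpleGraph (Fin 4)) p (mxHL ⊤ (fun v => if v = 1 then (1:ℝ) else 0)) =
      (3/4 : ℝ) * 3 ^ (1/p) := by
  have hsum : (∑ m : Fin 4, |if m = 1 then (1:ℝ) else 0|) = 1 := by
    rw [Fin.sum_univ_four]
    norm_num [show (0:Fin 4) ≠ 1 from by decide, show (2:Fin 4) ≠ 1 from by decide,
      show (3:Fin 4) ≠ 1 from by decide]
  have hM : mxHL (⊤ : SimpleGraph (Fin 4)) (fun v => if v = 1 then (1:ℝ) else 0)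
      = fun e => max |if e = 1 then (1:ℝ) else 0| (1/4) := by
    funext e
    rw [aux_mxHL_top, hsum]
  rw [hM, aux_vp_eq, aux_Qexpand]
  norm_num [show (0:Fin 4) ≠ 1 from by decide, show (2:Fin 4) ≠ 1 from by decide,
    show (3:Fin 4) ≠ 1 from by decide]
  rw [Real.zero_rpow hp0.ne']
  rw [show (1:ℝ)/2 * (2 * ((3/4:ℝ)^p + (0 + (0 + ((3/4:ℝ)^p + ((3/4:ℝ)^p + 0))))))
      = (3/4:ℝ)^p * 3 from by ring]
  rw [Real.mul_rpow (Real.rpow_nonneg (by norm_num) p) (by norm_num),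
    ← Real.rpow_mul (by norm_num : (0:ℝ) ≤ 3/4), mul_inv_cancel₀ hp0.ne',
    Real.rpow_one]

end DeltaComputation

/-- sharp bound for the `p`-variation of the Hardy–Littlewood maximal
operator on the complete graph `K_4`, for `0 < p ≤ 1`. -/
theorem completeGraphFour_var_sharp (p : ℝ) (hp0 : 0 < p) (hp1 : p ≤ 1) :
    (∀ f : Fin 4 → ℝ,
        vp (⊤ : SimpleGraph (Fin 4)) p (mxHL ⊤ f) ≤ (3 / 4 : ℝ) * vp ⊤ p f) ∧
    (0 < vp (⊤ : SimpleGraph (Fin 4)) p (fun v => if v = 1 then (1 : ℝ) else 0) ∧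
      vp (⊤ : SimpleGraph (Fin 4)) p
          (mxHL ⊤ (fun v => if v = 1 then (1 : ℝ) else 0)) =
        (3 / 4 : ℝ) *
          vp (⊤ : SimpleGraph (Fin 4)) p (fun v => if v = 1 then (1 : ℝ) else 0)) ∧
    sSup {c : ℝ | ∃ f : Fin 4 → ℝ, 0 < vp (⊤ : SimpleGraph (Fin 4)) p f ∧
        c = vp ⊤ p (mxHL ⊤ f) / vp ⊤ p f} = 3 / 4 := by
  have hδ := aux_vp_delta hp0
  have hMδ := aux_vp_Mdelta hp0
  have h3pos : (0:ℝ) < 3 ^ (1/p) := Real.rpow_pos_of_pos (by norm_num) _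
  have hδpos : 0 < vp (⊤ : SimpleGraph (Fin 4)) p (fun v => if v = 1 then (1 : ℝ) else 0) := by
    rw [hδ]; exact h3pos
  have hmem : (3/4 : ℝ) ∈ {c : ℝ | ∃ f : Fin 4 → ℝ, 0 < vp (⊤ : SimpleGraph (Fin 4)) p f ∧
      c = vp ⊤ p (mxHL ⊤ f) / vp ⊤ p f} := by
    refine ⟨fun v => if v = 1 then (1 : ℝ) else 0, hδpos, ?_⟩
    rw [hMδ, hδ, mul_div_assoc, div_self h3pos.ne', mul_one]
  have hub : ∀ c ∈ {c : ℝ | ∃ f : Fin 4 → ℝ, 0 < vp (⊤ : SimpleGraph (Fin 4)) p f ∧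
      c = vp ⊤ p (mxHL ⊤ f) / vp ⊤ p f}, c ≤ 3/4 := by
    rintro c ⟨f, hf, rfl⟩
    rw [div_le_iff₀ hf]
    exact aux_main hp0 hp1 f
  refine ⟨fun f => aux_main hp0 hp1 f, ⟨hδpos, by rw [hMδ, hδ]⟩, ?_⟩
  exact le_antisymm (csSup_le ⟨3/4, hmem⟩ hub) (le_csSup ⟨3/4, hub⟩ hmem)
end

section
/- Let 1 < p < ∞, let p' = p/(p−1), and set c := (1 + 2^{p'})^{1/p'} / 3 = (1 + 2^{p/(p−1)})^{(p−1)/p} / 3. Then: (a) for every function f : V(S_3) → ℝ one has Var_p(M_{S_3} f) ≤ c · Var_p f; (b) the function f defined by f(a_1) = 3, f(a_2) = 3 + 2^{1/(p−1)}, f(a_3) = 2 satisfies Var_p(M_{S_3} f) = c · Var_p f with Var_p f > 0; (c) c < 1. In particular, the best constant C_{S_3,p} := sup{ Var_p(M_{S_3} f)/Var_p f : Var_p f > 0 } equals (1 + 2^{p/(p−1)})^{(p−1)/p} / 3 and is strictly less than 1. -/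
open scoped Classical

namespace S3Aux


lemma radd_le {p : ℝ} (hp : 1 ≤ p) {u v : ℝ} (hu : 0 ≤ u) (hv : 0 ≤ v) :
    u ^ p + v ^ p ≤ (u + v) ^ p := by
  have h := NNReal.add_rpow_le_rpow_add (⟨u, hu⟩ : NNReal) ⟨v, hv⟩ hp
  rw [← NNReal.coe_le_coe] at h
  push_cast at h
  exact h

lemma holder2 {p : ℝ} (hp : 1 < p) {u v : ℝ} (hu : 0 ≤ u) (hv : 0 ≤ v) :
    2 * u + v ≤ ((2:ℝ) ^ (p/(p-1)) + 1) ^ ((p-1)/p) * (u ^ p + v ^ p) ^ (1/p) := by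
  have hpq : (p/(p-1)).HolderConjugate p := (Real.HolderConjugate.conjExponent hp).symm
  have h := Real.inner_le_Lp_mul_Lq_of_nonneg (s := (Finset.univ : Finset (Fin 2)))
    (f := ![2, 1]) (g := ![u, v]) hpq
    (by intro i _; fin_cases i <;> norm_num)
    (by intro i _; fin_cases i <;> simp [hu, hv])
  simp only [Fin.sum_univ_two, Matrix.cons_val_zero, Matrix.cons_val_one, Matrix.head_cons] at h
  rw [Real.one_rpow, one_div_div] at h
  linarith

lemma cpos {p c : ℝ} (hp : 1 < p)
    (hc : c = (1 + (2:ℝ) ^ (p/(p-1))) ^ ((p-1)/p) / 3) : 0 < c := by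
  rw [hc]; positivity

lemma keyK {p c : ℝ} (hp : 1 < p)
    (hc : c = (1 + (2:ℝ) ^ (p/(p-1))) ^ ((p-1)/p) / 3)
    {u v : ℝ} (hu : 0 ≤ u) (hv : 0 ≤ v) :
    ((2*u + v)/3) ^ p ≤ c ^ p * (u ^ p + v ^ p) := by
  have h0 : (0:ℝ) < p := by linarith
  have hT : (0:ℝ) ≤ u ^ p + v ^ p := by positivity
  have h1 : (2*u+v)/3 ≤ c * (u^p+v^p)^(1/p) := by
    have := holder2 hp hu hv
    rw [hc, add_comm (1:ℝ)]
    rw [div_mul_eq_mul_div, div_le_iff₀ (by norm_num : (0:ℝ) < 3)]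
    linarith
  calc ((2*u+v)/3) ^ p ≤ (c * (u^p+v^p)^(1/p)) ^ p := by
        apply Real.rpow_le_rpow (by positivity) h1 h0.le
    _ = c ^ p * (u ^ p + v ^ p) := by
        rw [Real.mul_rpow (cpos hp hc).le (by positivity)]
        congr 1
        rw [← Real.rpow_mul hT, one_div, inv_mul_cancel₀ h0.ne', Real.rpow_one]

lemma half_le {p c : ℝ} (hp : 1 < p)
    (hc : c = (1 + (2:ℝ) ^ (p/(p-1))) ^ ((p-1)/p) / 3)
    {a b : ℝ} (ha : 0 ≤ a) (hb : 0 ≤ b) :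
    (a/2) ^ p + (b/2) ^ p ≤ c ^ p * (a ^ p + b ^ p) := by
  have h0 : (0:ℝ) < p := by linarith
  have hq1 : 1 < p/(p-1) := (one_lt_div (by linarith)).2 (by linarith)
  have hchalf : (1:ℝ)/2 ≤ c := by
    have h2 : ((2:ℝ)^(p/(p-1)))^((p-1)/p) = 2 := by
      rw [← Real.rpow_mul (by norm_num)]
      have : p / (p-1) * ((p-1)/p) = 1 := by
        have h1 : p - 1 ≠ 0 := by linarith
        have h2 : p ≠ 0 := by linarith
        field_simp
      rw [this, Real.rpow_one]
    have hmono : ((2:ℝ)^(p/(p-1)))^((p-1)/p) ≤ (1 + (2:ℝ)^(p/(p-1)))^((p-1)/p) :=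
      Real.rpow_le_rpow (by positivity) (by linarith) (by apply div_nonneg <;> linarith)
    rw [hc]; rw [h2] at hmono; linarith
  have h12 : ((1:ℝ)/2) ^ p ≤ c ^ p := Real.rpow_le_rpow (by norm_num) hchalf h0.le
  have ea : (a/2) ^ p = a ^ p * (1/2) ^ p := by
    rw [← Real.mul_rpow ha (by norm_num)]; ring_nf
  have eb : (b/2) ^ p = b ^ p * (1/2) ^ p := by
    rw [← Real.mul_rpow hb (by norm_num)]; ring_nf
  have hap : (0:ℝ) ≤ a ^ p := Real.rpow_nonneg ha p
  have hbp : (0:ℝ) ≤ b ^ p := Real.rpow_nonneg hb p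
  calc (a/2) ^ p + (b/2) ^ p = (a^p + b^p) * (1/2)^p := by rw [ea, eb]; ring
    _ ≤ (a^p + b^p) * c^p := by
        apply mul_le_mul_of_nonneg_left h12 (by positivity)
    _ = c ^ p * (a^p + b^p) := by ring

lemma pair_le {p c : ℝ} (hp : 1 < p)
    (hc : c = (1 + (2:ℝ) ^ (p/(p-1))) ^ ((p-1)/p) / 3)
    {u v a b : ℝ} (hu : 0 ≤ u) (hv : 0 ≤ v) (ha : 0 ≤ a) (hb : 0 ≤ b)
    (h : u + v ≤ (2*a+b)/3) :
    u ^ p + v ^ p ≤ c ^ p * (a ^ p + b ^ p) := by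
  have h0 : (0:ℝ) < p := by linarith
  calc u^p + v^p ≤ (u+v)^p := radd_le hp.le hu hv
    _ ≤ ((2*a+b)/3)^p := Real.rpow_le_rpow (by positivity) h h0.le
    _ ≤ c^p*(a^p+b^p) := keyK hp hc ha hb

/-- The core pointwise inequality on the star `S_3`, assuming `0 ≤ z ≤ y`. -/
lemma core {p c : ℝ} (hp : 1 < p)
    (hc : c = (1 + (2:ℝ) ^ (p/(p-1))) ^ ((p-1)/p) / 3)
    {x y z : ℝ} (hx : 0 ≤ x) (hy : 0 ≤ y) (hz : 0 ≤ z) (hzy : z ≤ y) :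
    |max x ((x+y+z)/3) - max y (max ((x+y)/2) ((x+y+z)/3))| ^ p
      + |max x ((x+y+z)/3) - max z (max ((x+z)/2) ((x+y+z)/3))| ^ p
      ≤ c ^ p * (|x-y| ^ p + |x-z| ^ p) := by
  have h0 : (0:ℝ) < p := by linarith
  set S : ℝ := (x+y+z)/3 with hS
  rcases le_total y x with hyx | hxy
  · -- Case I : z ≤ y ≤ x
    have hm0 : max x S = x := max_eq_left (by rw [hS]; linarith)
    have hm1 : max y (max ((x+y)/2) S) = (x+y)/2 := by
      have h1 : max ((x+y)/2) S = (x+y)/2 := max_eq_left (by rw [hS]; linarith)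
      rw [h1]; exact max_eq_right (by linarith)
    have hm2u : max z (max ((x+z)/2) S) ≤ x :=
      max_le (by linarith) (max_le (by linarith) (by rw [hS]; linarith))
    have hm2l : (x+z)/2 ≤ max z (max ((x+z)/2) S) :=
      le_trans (le_max_left _ _) (le_max_right _ _)
    have hm2l' : S ≤ max z (max ((x+z)/2) S) :=
      le_trans (le_max_right _ _) (le_max_right _ _)
    rw [hm0, hm1]
    rw [abs_of_nonneg (by linarith : (0:ℝ) ≤ x - (x+y)/2),
        abs_of_nonneg (by linarith : (0:ℝ) ≤ x - max z (max ((x+z)/2) S)),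
        abs_of_nonneg (by linarith : (0:ℝ) ≤ x - y),
        abs_of_nonneg (by linarith : (0:ℝ) ≤ x - z)]
    rcases le_total (2*(x-y)) (x-z) with hab | hab
    · -- 2a ≤ b : use pair_le with (b,a)
      have e2 : x - max z (max ((x+z)/2) S) ≤ ((x-y)+(x-z))/3 := by
        rw [hS] at hm2l' ⊢; linarith
      calc (x - (x+y)/2) ^ p + (x - max z (max ((x+z)/2) S)) ^ p
          ≤ (x - (x+y)/2) ^ p + (((x-y)+(x-z))/3) ^ p := by
            apply add_le_add le_rfl
            apply Real.rpow_le_rpow (by linarith) e2 h0.le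
        _ ≤ c ^ p * ((x-z) ^ p + (x-y) ^ p) := by
            apply pair_le hp hc (by linarith) (by linarith) (by linarith) (by linarith)
            linarith
        _ = c ^ p * ((x-y) ^ p + (x-z) ^ p) := by ring
    · -- b ≤ 2a : use the (1/2, 1/2) bound
      have e2 : x - max z (max ((x+z)/2) S) ≤ (x-z)/2 := by linarith
      calc (x - (x+y)/2) ^ p + (x - max z (max ((x+z)/2) S)) ^ p
          ≤ ((x-y)/2) ^ p + ((x-z)/2) ^ p := by
            apply add_le_add
            · apply Real.rpow_le_rpow (by linarith) (by linarith) h0.le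
            · apply Real.rpow_le_rpow (by linarith) e2 h0.le
        _ ≤ c ^ p * ((x-y) ^ p + (x-z) ^ p) := half_le hp hc (by linarith) (by linarith)
  · -- x ≤ y
    have hm1 : max y (max ((x+y)/2) S) = y :=
      max_eq_left (max_le (by linarith) (by rw [hS]; linarith))
    rcases le_total z x with hzx | hxz
    · -- Case II : z ≤ x ≤ y
      have hm2 : max z (max ((x+z)/2) S) = S := by
        have h1 : max ((x+z)/2) S = S := max_eq_right (by rw [hS]; linarith)
        rw [h1]; exact max_eq_right (by rw [hS]; linarith)
      rw [hm1, hm2]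
      rw [abs_of_nonpos (by linarith : x - y ≤ 0), neg_sub,
          abs_of_nonneg (by linarith : (0:ℝ) ≤ x - z)]
      rcases le_total S x with hSx | hxS
      · -- II.a : m0 = x
        have hm0 : max x S = x := max_eq_left hSx
        rw [hm0, abs_of_nonpos (by linarith : x - y ≤ 0), neg_sub,
            abs_of_nonneg (by linarith : (0:ℝ) ≤ x - S)]
        apply pair_le hp hc (by linarith) (by linarith) (by linarith) (by linarith)
        rw [hS]; ring_nf; linarith
      · -- II.b : m0 = S
        have hm0 : max x S = S := max_eq_right hxS
        rw [hm0, abs_of_nonpos (by rw [hS]; linarith : S - y ≤ 0), neg_sub, sub_self,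
            abs_zero]
        apply pair_le hp hc (by rw [hS]; linarith) le_rfl (by linarith) (by linarith)
        rw [hS]; ring_nf; linarith
    · -- Case III : x ≤ z ≤ y
      have hm0 : max x S = S := max_eq_right (by rw [hS]; linarith)
      have hm2 : max z (max ((x+z)/2) S) = max z S := by
        have h1 : max ((x+z)/2) S = S := max_eq_right (by rw [hS]; linarith)
        rw [h1]
      rw [hm0, hm1, hm2]
      rw [abs_of_nonpos (by rw [hS]; linarith : S - y ≤ 0), neg_sub,
          abs_of_nonpos (by linarith : x - y ≤ 0), neg_sub,
          abs_of_nonpos (by linarith : x - z ≤ 0), neg_sub]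
      rcases le_total z S with hzS | hSz
      · -- III.b : m2 = S
        rw [max_eq_right hzS, sub_self, abs_zero]
        apply pair_le hp hc (by rw [hS]; linarith) le_rfl (by linarith) (by linarith)
        rw [hS]; ring_nf; linarith
      · -- III.a : m2 = z
        rw [max_eq_left hSz, abs_of_nonpos (by linarith : S - z ≤ 0), neg_sub]
        apply pair_le hp hc (by rw [hS]; linarith) (by linarith) (by linarith) (by linarith)
        rw [hS]; ring_nf; linarith

lemma adj01 : (starG 3).Adj 0 1 := show _ ∧ _ from ⟨by decide, Or.inl rfl⟩
lemma adj02 : (starG 3).Adj 0 2 := show _ ∧ _ from ⟨by decide, Or.inl rfl⟩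
lemma adj10 : (starG 3).Adj 1 0 := adj01.symm
lemma adj20 : (starG 3).Adj 2 0 := adj02.symm
lemma nadj12 : ¬ (starG 3).Adj 1 2 := fun (h : _ ∧ _) => by
  rcases h.2 with h2 | h2 <;> revert h2 <;> decide
lemma nadj21 : ¬ (starG 3).Adj 2 1 := fun h => nadj12 h.symm

lemma reach0 (v : Fin 3) : (starG 3).Reachable 0 v := by
  by_cases h : v = 0
  · rw [h]
  · exact SimpleGraph.Adj.reachable (show (starG 3).Adj 0 v from show _ ∧ _ from ⟨fun e => h e.symm, Or.inl rfl⟩)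

lemma reach (v w : Fin 3) : (starG 3).Reachable v w := (reach0 v).symm.trans (reach0 w)

lemma dist01 : (starG 3).dist 0 1 = 1 := SimpleGraph.dist_eq_one_iff_adj.2 adj01
lemma dist02 : (starG 3).dist 0 2 = 1 := SimpleGraph.dist_eq_one_iff_adj.2 adj02
lemma dist10 : (starG 3).dist 1 0 = 1 := SimpleGraph.dist_eq_one_iff_adj.2 adj10
lemma dist20 : (starG 3).dist 2 0 = 1 := SimpleGraph.dist_eq_one_iff_adj.2 adj20

lemma dist12 : (starG 3).dist 1 2 = 2 := by
  have hle : (starG 3).dist 1 2 ≤ 2 := by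
    have := SimpleGraph.dist_le ((adj10.toWalk).append adj02.toWalk)
    simpa using this
  have h0 : (starG 3).dist 1 2 ≠ 0 := by
    intro h
    rcases SimpleGraph.dist_eq_zero_iff_eq_or_not_reachable.mp h with h' | h'
    · exact absurd h' (by decide)
    · exact h' (reach 1 2)
  have h1 : (starG 3).dist 1 2 ≠ 1 := fun h =>
    nadj12 (SimpleGraph.dist_eq_one_iff_adj.1 h)
  omega

lemma dist21 : (starG 3).dist 2 1 = 2 := by
  rw [SimpleGraph.dist_comm]; exact dist12

lemma gball_e0 (e : Fin 3) : gball (starG 3) e 0 = {e} := by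
  ext m
  simp only [gball, Finset.mem_filter, Finset.mem_univ, true_and, Finset.mem_singleton,
    Nat.le_zero]
  constructor
  · rintro ⟨hr, hd⟩
    exact ((SimpleGraph.Reachable.dist_eq_zero_iff hr).mp hd).symm
  · rintro rfl
    exact ⟨SimpleGraph.Reachable.refl _, by simp⟩

lemma gball_univ (e : Fin 3) (r : ℕ) (hr : 2 ≤ r) : gball (starG 3) e r = Finset.univ := by
  apply Finset.eq_univ_of_forall
  intro m
  simp only [gball, Finset.mem_filter, Finset.mem_univ, true_and]
  refine ⟨reach e m, le_trans ?_ hr⟩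
  fin_cases e <;> fin_cases m <;>
    simp [dist01, dist02, dist10, dist20, dist12, dist21, SimpleGraph.dist_self]

lemma gball_01 : gball (starG 3) 0 1 = Finset.univ := by
  apply Finset.eq_univ_of_forall
  intro m
  simp only [gball, Finset.mem_filter, Finset.mem_univ, true_and]
  refine ⟨reach 0 m, ?_⟩
  fin_cases m <;> simp [dist01, dist02, SimpleGraph.dist_self]

lemma gball_11 : gball (starG 3) 1 1 = {0, 1} := by
  ext m
  simp only [gball, Finset.mem_filter, Finset.mem_univ, true_and, Finset.mem_insert,
    Finset.mem_singleton]
  fin_cases m <;>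
    simp [dist10, dist12, SimpleGraph.dist_self, reach]

lemma gball_21 : gball (starG 3) 2 1 = {0, 2} := by
  ext m
  simp only [gball, Finset.mem_filter, Finset.mem_univ, true_and, Finset.mem_insert,
    Finset.mem_singleton]
  fin_cases m <;>
    simp [dist20, dist21, SimpleGraph.dist_self, reach]

lemma iSup_eq_max3 (A : ℕ → ℝ) (v0 v1 v2 : ℝ) (h0 : A 0 = v0) (h1 : A 1 = v1)
    (h2 : ∀ r, 2 ≤ r → A r = v2) : (⨆ r, A r) = max v0 (max v1 v2) := by
  have hb : ∀ r, A r ≤ max v0 (max v1 v2) := by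
    intro r
    match r with
    | 0 => rw [h0]; exact le_max_left _ _
    | 1 => rw [h1]; exact (le_max_left _ _).trans (le_max_right _ _)
    | (n+2) => rw [h2 (n+2) (by omega)]; exact (le_max_right _ _).trans (le_max_right _ _)
  have hbdd : BddAbove (Set.range A) := ⟨_, by rintro t ⟨r, rfl⟩; exact hb r⟩
  apply le_antisymm (ciSup_le hb)
  apply max_le
  · rw [← h0]; exact le_ciSup hbdd 0
  apply max_le
  · rw [← h1]; exact le_ciSup hbdd 1
  · rw [← h2 2 le_rfl]; exact le_ciSup hbdd 2

lemma mxHL0 (f : Fin 3 → ℝ) :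
    mxHL (starG 3) f 0 = max (|f 0|) ((|f 0| + |f 1| + |f 2|)/3) := by
  rw [mxHL, iSup_eq_max3 _ (|f 0|) ((|f 0| + |f 1| + |f 2|)/3) ((|f 0| + |f 1| + |f 2|)/3),
    max_self]
  · rw [gball_e0]; simp
  · rw [gball_01]; rw [Fin.sum_univ_three]; simp; ring
  · intro r hr; rw [gball_univ 0 r hr, Fin.sum_univ_three]; simp; ring

lemma mxHL1 (f : Fin 3 → ℝ) :
    mxHL (starG 3) f 1 =
      max (|f 1|) (max ((|f 0| + |f 1|)/2) ((|f 0| + |f 1| + |f 2|)/3)) := by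
  rw [mxHL, iSup_eq_max3 _ (|f 1|) ((|f 0| + |f 1|)/2) ((|f 0| + |f 1| + |f 2|)/3)]
  · rw [gball_e0]; simp
  · rw [gball_11]
    rw [Finset.sum_pair (by decide : (0 : Fin 3) ≠ 1),
      Finset.card_pair (by decide : (0 : Fin 3) ≠ 1)]
    push_cast; ring
  · intro r hr; rw [gball_univ 1 r hr, Fin.sum_univ_three]; simp; ring

lemma mxHL2 (f : Fin 3 → ℝ) :
    mxHL (starG 3) f 2 =
      max (|f 2|) (max ((|f 0| + |f 2|)/2) ((|f 0| + |f 1| + |f 2|)/3)) := by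
  rw [mxHL, iSup_eq_max3 _ (|f 2|) ((|f 0| + |f 2|)/2) ((|f 0| + |f 1| + |f 2|)/3)]
  · rw [gball_e0]; simp
  · rw [gball_21]
    rw [Finset.sum_pair (by decide : (0 : Fin 3) ≠ 2),
      Finset.card_pair (by decide : (0 : Fin 3) ≠ 2)]
    push_cast; ring
  · intro r hr; rw [gball_univ 2 r hr, Fin.sum_univ_three]; simp; ring

lemma vp_eq (p : ℝ) (g : Fin 3 → ℝ) :
    vp (starG 3) p g = (|g 0 - g 1| ^ p + |g 0 - g 2| ^ p) ^ (1/p) := by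
  rw [vp]
  congr 1
  rw [Fin.sum_univ_three]
  simp only [Fin.sum_univ_three]
  rw [if_pos adj01, if_pos adj02, if_pos adj10, if_neg nadj12, if_pos adj20, if_neg nadj21,
    if_neg ((starG 3).loopless.irrefl 0), if_neg ((starG 3).loopless.irrefl 1), if_neg ((starG 3).loopless.irrefl 2)]
  rw [abs_sub_comm (g 1) (g 0), abs_sub_comm (g 2) (g 0)]
  ring

section PartA
variable {p c : ℝ}

lemma rpow_invp (hp : 1 < p) {u : ℝ} (hu : 0 ≤ u) : (u ^ p) ^ (1/p) = u := by
  rw [← Real.rpow_mul hu, mul_one_div, div_self (by linarith : p ≠ 0), Real.rpow_one]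

lemma partA (hp : 1 < p) (hc : c = (1 + (2:ℝ) ^ (p/(p-1))) ^ ((p-1)/p) / 3) (f : Fin 3 → ℝ) :
    vp (starG 3) p (mxHL (starG 3) f) ≤ c * vp (starG 3) p f := by
  have h0 : (0:ℝ) < p := by linarith
  rw [vp_eq, vp_eq, mxHL0, mxHL1, mxHL2]
  set x := |f 0| with hx
  set y := |f 1| with hy
  set z := |f 2| with hz
  have key : |max x ((x+y+z)/3) - max y (max ((x+y)/2) ((x+y+z)/3))| ^ p
      + |max x ((x+y+z)/3) - max z (max ((x+z)/2) ((x+y+z)/3))| ^ p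
      ≤ c ^ p * (|x-y| ^ p + |x-z| ^ p) := by
    rcases le_total z y with hzy | hyz
    · exact core hp hc (abs_nonneg _) (abs_nonneg _) (abs_nonneg _) hzy
    · have h := core hp hc (abs_nonneg (f 0)) (abs_nonneg (f 2)) (abs_nonneg (f 1)) hyz
      have e : (x+z+y)/3 = (x+y+z)/3 := by ring
      rw [e] at h
      linarith [h]
  have hb1 : |x - y| ^ p ≤ |f 0 - f 1| ^ p :=
    Real.rpow_le_rpow (abs_nonneg _) (abs_abs_sub_abs_le_abs_sub _ _) h0.le
  have hb2 : |x - z| ^ p ≤ |f 0 - f 2| ^ p :=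
    Real.rpow_le_rpow (abs_nonneg _) (abs_abs_sub_abs_le_abs_sub _ _) h0.le
  have key2 : |max x ((x+y+z)/3) - max y (max ((x+y)/2) ((x+y+z)/3))| ^ p
      + |max x ((x+y+z)/3) - max z (max ((x+z)/2) ((x+y+z)/3))| ^ p
      ≤ c ^ p * (|f 0 - f 1| ^ p + |f 0 - f 2| ^ p) := by
    refine key.trans (mul_le_mul_of_nonneg_left (by linarith) ?_)
    exact Real.rpow_nonneg (cpos hp hc).le p
  have hL : (0:ℝ) ≤ |max x ((x+y+z)/3) - max y (max ((x+y)/2) ((x+y+z)/3))| ^ p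
      + |max x ((x+y+z)/3) - max z (max ((x+z)/2) ((x+y+z)/3))| ^ p := by positivity
  have hR : (0:ℝ) ≤ |f 0 - f 1| ^ p + |f 0 - f 2| ^ p := by positivity
  calc (|max x ((x+y+z)/3) - max y (max ((x+y)/2) ((x+y+z)/3))| ^ p
      + |max x ((x+y+z)/3) - max z (max ((x+z)/2) ((x+y+z)/3))| ^ p) ^ (1/p)
      ≤ (c ^ p * (|f 0 - f 1| ^ p + |f 0 - f 2| ^ p)) ^ (1/p) :=
        Real.rpow_le_rpow hL key2 (by positivity)
    _ = c * (|f 0 - f 1| ^ p + |f 0 - f 2| ^ p) ^ (1/p) := by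
        rw [Real.mul_rpow (Real.rpow_nonneg (cpos hp hc).le p) hR, rpow_invp hp (cpos hp hc).le]
end PartA

section PartB
variable {p c : ℝ}

lemma partB (hp : 1 < p) (hc : c = (1 + (2:ℝ) ^ (p/(p-1))) ^ ((p-1)/p) / 3) :
    0 < vp (starG 3) p
          (fun v => if v = 0 then (3 : ℝ) else
            if v = 1 then 3 + (2 : ℝ) ^ (1 / (p - 1)) else 2) ∧
      vp (starG 3) p
          (mxHL (starG 3)
            (fun v => if v = 0 then (3 : ℝ) else
              if v = 1 then 3 + (2 : ℝ) ^ (1 / (p - 1)) else 2)) =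
        c * vp (starG 3) p
          (fun v => if v = 0 then (3 : ℝ) else
            if v = 1 then 3 + (2 : ℝ) ^ (1 / (p - 1)) else 2) := by
  have h0 : (0:ℝ) < p := by linarith
  set t : ℝ := (2 : ℝ) ^ (1 / (p - 1)) with htdef
  set F : Fin 3 → ℝ := fun v => if v = 0 then (3 : ℝ) else if v = 1 then 3 + t else 2
    with hFdef
  have ht1 : 1 < t := by
    rw [htdef]
    exact (Real.one_lt_rpow_iff_of_pos (by norm_num)).mpr
      (Or.inl ⟨by norm_num, one_div_pos.mpr (by linarith)⟩)
  have hF0 : F 0 = 3 := by rw [hFdef]; exact if_pos rfl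
  have hF1 : F 1 = 3 + t := by
    rw [hFdef]; exact (if_neg (by decide)).trans (if_pos rfl)
  have hF2 : F 2 = 2 := by
    rw [hFdef]; exact (if_neg (by decide)).trans (if_neg (by decide))
  have haF0 : |F 0| = 3 := by rw [hF0]; norm_num
  have haF1 : |F 1| = 3 + t := by rw [hF1, abs_of_pos (by linarith)]
  have haF2 : |F 2| = 2 := by rw [hF2]; norm_num
  -- maximal function values
  have hM0 : mxHL (starG 3) F 0 = (8 + t)/3 := by
    rw [mxHL0, haF0, haF1, haF2, max_eq_right (by linarith)]; ring
  have hM1 : mxHL (starG 3) F 1 = 3 + t := by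
    rw [mxHL1, haF0, haF1, haF2]
    exact max_eq_left (max_le (by linarith) (by linarith))
  have hM2 : mxHL (starG 3) F 2 = (8 + t)/3 := by
    rw [mxHL2, haF0, haF1, haF2]
    have h1 : max ((3 + 2:ℝ)/2) ((3 + (3 + t) + 2)/3) = (3 + (3 + t) + 2)/3 :=
      max_eq_right (by linarith)
    rw [h1, max_eq_right (by linarith)]; ring
  -- p-variation of F
  have hvpF : vp (starG 3) p F = (t ^ p + 1) ^ (1/p) := by
    rw [vp_eq, hF0, hF1, hF2]
    have e1 : |(3:ℝ) - (3 + t)| = t := by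
      rw [abs_of_nonpos (by linarith)]; ring
    have e2 : |(3:ℝ) - 2| = 1 := by norm_num
    rw [e1, e2, Real.one_rpow]
  have hvpF_pos : 0 < vp (starG 3) p F := by
    rw [hvpF]
    exact Real.rpow_pos_of_pos (by positivity) _
  refine ⟨hvpF_pos, ?_⟩
  -- p-variation of the maximal function
  have hvpM : vp (starG 3) p (mxHL (starG 3) F) = (2*t + 1)/3 := by
    rw [vp_eq, hM0, hM1, hM2, sub_self, abs_zero, Real.zero_rpow (by linarith : p ≠ 0),
      add_zero]
    have e1 : |(8 + t)/3 - (3 + t)| = (2*t + 1)/3 := by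
      rw [abs_of_nonpos (by linarith)]; ring
    rw [e1, rpow_invp hp (by linarith)]
  rw [hvpM, hvpF, hc]
  -- now pure computation
  have htp : t ^ p = (2:ℝ) ^ (p/(p-1)) := by
    rw [htdef, ← Real.rpow_mul (by norm_num), one_div, inv_mul_eq_div]
  have h2t : 2 * t = (2:ℝ) ^ (p/(p-1)) := by
    rw [htdef]
    rw [show (2:ℝ) * 2 ^ (1/(p-1)) = 2 ^ (1:ℝ) * 2 ^ (1/(p-1)) by rw [Real.rpow_one]]
    rw [← Real.rpow_add (by norm_num)]
    congr 1
    have hne : p - 1 ≠ 0 := by linarith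
    field_simp; ring
  rw [htp, h2t]
  set B : ℝ := 1 + (2:ℝ) ^ (p/(p-1)) with hB
  have hBpos : 0 < B := by rw [hB]; positivity
  have e : (2:ℝ) ^ (p/(p-1)) + 1 = B := by rw [hB]; ring
  rw [e, div_mul_eq_mul_div, ← Real.rpow_add hBpos]
  have : (p-1)/p + 1/p = 1 := by field_simp; ring
  rw [this, Real.rpow_one]
end PartB

section PartCD
variable {p c : ℝ}

lemma partC (hp : 1 < p) (hc : c = (1 + (2:ℝ) ^ (p/(p-1))) ^ ((p-1)/p) / 3) : c < 1 := by
  have h0 : (0:ℝ) < p := by linarith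
  set q : ℝ := p/(p-1) with hq
  have hq1 : 1 < q := by
    rw [hq]; exact (one_lt_div (by linarith)).2 (by linarith)
  have hA : (1:ℝ) < 3 ^ (q-1) :=
    (Real.one_lt_rpow_iff_of_pos (by norm_num)).mpr (Or.inl ⟨by norm_num, by linarith⟩)
  have hB : (2:ℝ) ^ (q-1) < 3 ^ (q-1) :=
    Real.rpow_lt_rpow (by norm_num) (by norm_num) (by linarith)
  have hBpos : (0:ℝ) < 2 ^ (q-1) := Real.rpow_pos_of_pos (by norm_num) _
  have e3 : (3:ℝ) ^ q = 3 ^ (q-1) * 3 := by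
    rw [show (3:ℝ) ^ (q-1) * 3 = 3 ^ (q-1) * 3 ^ (1:ℝ) by rw [Real.rpow_one],
      ← Real.rpow_add (by norm_num), sub_add_cancel]
  have e2 : (2:ℝ) ^ q = 2 ^ (q-1) * 2 := by
    rw [show (2:ℝ) ^ (q-1) * 2 = 2 ^ (q-1) * 2 ^ (1:ℝ) by rw [Real.rpow_one],
      ← Real.rpow_add (by norm_num), sub_add_cancel]
  have h3 : (1:ℝ) + 2 ^ q < 3 ^ q := by
    rw [e2, e3]; nlinarith
  have hmono : ((1:ℝ) + 2 ^ q) ^ ((p-1)/p) < ((3:ℝ) ^ q) ^ ((p-1)/p) := by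
    apply Real.rpow_lt_rpow (by positivity) h3
    apply div_pos (by linarith) h0
  have e33 : ((3:ℝ) ^ q) ^ ((p-1)/p) = 3 := by
    rw [← Real.rpow_mul (by norm_num)]
    have : q * ((p-1)/p) = 1 := by
      rw [hq]
      have h1 : p - 1 ≠ 0 := by linarith
      field_simp
    rw [this, Real.rpow_one]
  rw [hc, div_lt_one (by norm_num)]
  rw [e33] at hmono
  exact hmono

lemma partD (hp : 1 < p) (hc : c = (1 + (2:ℝ) ^ (p/(p-1))) ^ ((p-1)/p) / 3)
    (hA : ∀ f : Fin 3 → ℝ, vp (starG 3) p (mxHL (starG 3) f) ≤ c * vp (starG 3) p f)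
    (f₀ : Fin 3 → ℝ) (h₀ : 0 < vp (starG 3) p f₀)
    (heq : vp (starG 3) p (mxHL (starG 3) f₀) = c * vp (starG 3) p f₀) :
    sSup {t : ℝ | ∃ f : Fin 3 → ℝ, 0 < vp (starG 3) p f ∧
        t = vp (starG 3) p (mxHL (starG 3) f) / vp (starG 3) p f} = c := by
  have hmem : c ∈ {t : ℝ | ∃ f : Fin 3 → ℝ, 0 < vp (starG 3) p f ∧
      t = vp (starG 3) p (mxHL (starG 3) f) / vp (starG 3) p f} := by
    refine ⟨f₀, h₀, ?_⟩
    rw [heq, mul_div_cancel_right₀ _ h₀.ne']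
  have hub : ∀ t ∈ {t : ℝ | ∃ f : Fin 3 → ℝ, 0 < vp (starG 3) p f ∧
      t = vp (starG 3) p (mxHL (starG 3) f) / vp (starG 3) p f}, t ≤ c := by
    rintro t ⟨f, hf, rfl⟩
    rw [div_le_iff₀ hf]
    exact hA f
  exact le_antisymm (csSup_le ⟨c, hmem⟩ hub) (le_csSup ⟨c, hub⟩ hmem)
end PartCD

end S3Aux

/-- the sharp constant for the `p`-variation of the Hardy–Littlewood maximal
operator on the star graph `S_3`, for `1 < p`, is `(1 + 2^(p/(p-1)))^((p-1)/p) / 3 < 1`. -/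
theorem starGraphThree_var_sharp_p_gt_one (p : ℝ) (hp : 1 < p) (c : ℝ)
    (hc : c = (1 + (2 : ℝ) ^ (p / (p - 1))) ^ ((p - 1) / p) / 3) :
    (∀ f : Fin 3 → ℝ, vp (starG 3) p (mxHL (starG 3) f) ≤ c * vp (starG 3) p f) ∧
    (0 < vp (starG 3) p
          (fun v => if v = 0 then (3 : ℝ) else
            if v = 1 then 3 + (2 : ℝ) ^ (1 / (p - 1)) else 2) ∧
      vp (starG 3) p
          (mxHL (starG 3)
            (fun v => if v = 0 then (3 : ℝ) else
              if v = 1 then 3 + (2 : ℝ) ^ (1 / (p - 1)) else 2)) =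
        c * vp (starG 3) p
          (fun v => if v = 0 then (3 : ℝ) else
            if v = 1 then 3 + (2 : ℝ) ^ (1 / (p - 1)) else 2)) ∧
    c < 1 ∧
    sSup {t : ℝ | ∃ f : Fin 3 → ℝ, 0 < vp (starG 3) p f ∧
        t = vp (starG 3) p (mxHL (starG 3) f) / vp (starG 3) p f} = c := by
  obtain ⟨hb1, hb2⟩ := S3Aux.partB hp hc
  exact ⟨S3Aux.partA hp hc, ⟨hb1, hb2⟩, S3Aux.partC hp hc,
    S3Aux.partD hp hc (S3Aux.partA hp hc) _ hb1 hb2⟩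
end
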